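/- arXiv:1905.12257 — 6 statements merged into one kernel-verified Lean document; each statement's English description precedes it below -/
import Mathlib

section
/- Let Z be a real Banach space, u ∈ S_Z, and 0 < λ ≤ 1. Then n(Z,u) ≥ λ if and only if max{ ‖u + z‖, ‖u − z‖ } ≥ 1 + λ‖z‖ for every z ∈ Z. -/
open NormedSpace

/-- Numerical radius of `z` with respect to the unit vector `u`. -/
noncomputable def vRad {Z : Type*} [NormedAddCommGroup Z] [NormedSpace ℝ Z] (u z : Z) : ℝ :=
  sSup {r : ℝ | ∃ φ : StrongDual ℝ Z, ‖φ‖ = 1 ∧ φ u = 1 ∧ |φ z| = r}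

/-- Numerical index of the space with respect to the unit vector `u`. -/
noncomputable def nInd {Z : Type*} [NormedAddCommGroup Z] [NormedSpace ℝ Z] (u : Z) : ℝ :=
  sInf {r : ℝ | ∃ z : Z, ‖z‖ = 1 ∧ vRad u z = r}

section Aux

variable {Z : Type*} [NormedAddCommGroup Z] [NormedSpace ℝ Z]

/-- difference quotient of the norm at `u` in direction `x` -/
noncomputable def Pquot (u x : Z) (t : ℝ) : ℝ := (‖u + t • x‖ - 1) / t

/-- one-sided derivative (infimum of difference quotients) -/
noncomputable def Pfun (u x : Z) : ℝ := sInf (Pquot u x '' Set.Ioi 0)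

lemma Pquot_lb (u x : Z) (hu : ‖u‖ = 1) {t : ℝ} (ht : 0 < t) : -‖x‖ ≤ Pquot u x t := by
  have h1 : (1 : ℝ) - t * ‖x‖ ≤ ‖u + t • x‖ := by
    have h3 : ‖u‖ ≤ ‖u + t • x‖ + ‖t • x‖ := by
      calc ‖u‖ = ‖(u + t • x) - t • x‖ := by rw [add_sub_cancel_right]
        _ ≤ ‖u + t • x‖ + ‖t • x‖ := norm_sub_le _ _
    rw [hu] at h3
    have h2 : ‖t • x‖ = t * ‖x‖ := by
      rw [norm_smul, Real.norm_eq_abs, abs_of_pos ht]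
    linarith
  rw [Pquot, le_div_iff₀ ht]
  nlinarith

lemma Pquot_bddBelow (u x : Z) (hu : ‖u‖ = 1) : BddBelow (Pquot u x '' Set.Ioi 0) := by
  refine ⟨-‖x‖, ?_⟩
  rintro r ⟨t, ht, rfl⟩
  exact Pquot_lb u x hu ht

lemma Pquot_nonempty (u x : Z) : (Pquot u x '' Set.Ioi 0).Nonempty :=
  ⟨Pquot u x 1, ⟨1, by norm_num, rfl⟩⟩

lemma Pfun_le (u x : Z) (hu : ‖u‖ = 1) {t : ℝ} (ht : 0 < t) : Pfun u x ≤ Pquot u x t :=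
  csInf_le (Pquot_bddBelow u x hu) ⟨t, ht, rfl⟩

lemma le_Pfun (u x : Z) {c : ℝ} (h : ∀ t > (0:ℝ), c ≤ Pquot u x t) : c ≤ Pfun u x := by
  refine le_csInf (Pquot_nonempty u x) ?_
  rintro r ⟨t, ht, rfl⟩
  exact h t ht

lemma Pquot_mono (u x : Z) (hu : ‖u‖ = 1) {s t : ℝ} (hs : 0 < s) (hst : s ≤ t) :
    Pquot u x s ≤ Pquot u x t := by
  have ht : 0 < t := lt_of_lt_of_le hs hst
  have key : t * ‖u + s • x‖ ≤ (t - s) + s * ‖u + t • x‖ := by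
    have hid : t • (u + s • x) = (t - s) • u + s • (u + t • x) := by module
    calc t * ‖u + s • x‖ = ‖t • (u + s • x)‖ := by
          rw [norm_smul, Real.norm_eq_abs, abs_of_pos ht]
      _ = ‖(t - s) • u + s • (u + t • x)‖ := by rw [hid]
      _ ≤ ‖(t - s) • u‖ + ‖s • (u + t • x)‖ := norm_add_le _ _
      _ = (t - s) * ‖u‖ + s * ‖u + t • x‖ := by
          rw [norm_smul, norm_smul, Real.norm_eq_abs, Real.norm_eq_abs,
            abs_of_nonneg (sub_nonneg.2 hst), abs_of_pos hs]
      _ = (t - s) + s * ‖u + t • x‖ := by rw [hu]; ring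
  rw [Pquot, Pquot, div_le_div_iff₀ hs ht]
  linarith

lemma Pquot_double (u x y : Z) {t : ℝ} (ht : 0 < t) :
    Pquot u (x + y) (t / 2) ≤ Pquot u x t + Pquot u y t := by
  have hid : u + (t / 2) • (x + y) = (1/2 : ℝ) • (u + t • x) + (1/2 : ℝ) • (u + t • y) := by
    module
  have key : ‖u + (t / 2) • (x + y)‖ ≤ (‖u + t • x‖ + ‖u + t • y‖) / 2 := by
    rw [hid]
    calc ‖(1/2 : ℝ) • (u + t • x) + (1/2 : ℝ) • (u + t • y)‖
        ≤ ‖(1/2 : ℝ) • (u + t • x)‖ + ‖(1/2 : ℝ) • (u + t • y)‖ := norm_add_le _ _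
      _ = (‖u + t • x‖ + ‖u + t • y‖) / 2 := by
          rw [norm_smul, norm_smul]
          simp [Real.norm_eq_abs]
          ring
  rw [Pquot, Pquot, Pquot, ← add_div, div_le_div_iff₀ (by positivity) ht]
  nlinarith

lemma Pfun_add (u x y : Z) (hu : ‖u‖ = 1) : Pfun u (x + y) ≤ Pfun u x + Pfun u y := by
  have key : ∀ s > (0:ℝ), ∀ r > (0:ℝ), Pfun u (x + y) ≤ Pquot u x s + Pquot u y r := by
    intro s hs r hr
    set t := min s r with htdef
    have ht : 0 < t := lt_min hs hr
    calc Pfun u (x + y) ≤ Pquot u (x + y) (t / 2) := Pfun_le u _ hu (by positivity)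
      _ ≤ Pquot u x t + Pquot u y t := Pquot_double u x y ht
      _ ≤ Pquot u x s + Pquot u y r :=
          add_le_add (Pquot_mono u x hu ht (min_le_left _ _))
            (Pquot_mono u y hu ht (min_le_right _ _))
  have h1 : ∀ r > (0:ℝ), Pfun u (x + y) - Pfun u x ≤ Pquot u y r := by
    intro r hr
    have : Pfun u (x + y) - Pquot u y r ≤ Pfun u x := by
      refine le_csInf (Pquot_nonempty u x) ?_
      rintro b ⟨s, hs, rfl⟩
      linarith [key s hs r hr]
    linarith
  have h2 : Pfun u (x + y) - Pfun u x ≤ Pfun u y := le_Pfun u y h1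
  linarith

lemma Pquot_smul (u x : Z) {c t : ℝ} (hc : 0 < c) (ht : 0 < t) :
    Pquot u (c • x) t = c * Pquot u x (t * c) := by
  rw [Pquot, Pquot, smul_smul]
  field_simp

lemma Pfun_smul (u x : Z) (hu : ‖u‖ = 1) {c : ℝ} (hc : 0 < c) :
    Pfun u (c • x) = c * Pfun u x := by
  refine le_antisymm ?_ ?_
  · rw [← div_le_iff₀' hc]
    refine le_Pfun u x ?_
    intro s hs
    rw [div_le_iff₀' hc]
    calc Pfun u (c • x) ≤ Pquot u (c • x) (s / c) := Pfun_le u _ hu (by positivity)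
      _ = c * Pquot u x (s / c * c) := Pquot_smul u x hc (by positivity)
      _ = c * Pquot u x s := by rw [div_mul_cancel₀ _ hc.ne']
  · refine le_Pfun u (c • x) ?_
    intro t ht
    rw [Pquot_smul u x hc ht]
    exact mul_le_mul_of_nonneg_left (Pfun_le u x hu (t := t * c) (by positivity)) hc.le

lemma Pfun_zero_nonneg (u : Z) (hu : ‖u‖ = 1) : (0:ℝ) ≤ Pfun u 0 := by
  refine le_Pfun u 0 ?_
  intro t ht
  simp [Pquot, hu]

lemma Pfun_neg_add_nonneg (u x : Z) (hu : ‖u‖ = 1) : (0:ℝ) ≤ Pfun u x + Pfun u (-x) := by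
  have := Pfun_add u x (-x) hu
  rw [add_neg_cancel] at this
  linarith [Pfun_zero_nonneg u hu]

lemma Pfun_le_norm (u x : Z) (hu : ‖u‖ = 1) : Pfun u x ≤ ‖x‖ := by
  refine (Pfun_le u x hu one_pos).trans ?_
  rw [Pquot]
  simp only [one_smul, div_one]
  have := norm_add_le u x
  rw [hu] at this
  linarith

lemma Pfun_u_le (u : Z) (hu : ‖u‖ = 1) : Pfun u u ≤ 1 := by
  refine (Pfun_le u u hu one_pos).trans ?_
  rw [Pquot]
  have : u + (1:ℝ) • u = (2:ℝ) • u := by module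
  rw [this, norm_smul, hu]
  norm_num

lemma Pfun_neg_u_le (u : Z) (hu : ‖u‖ = 1) : Pfun u (-u) ≤ -1 := by
  refine (Pfun_le u (-u) hu (t := 1/2) (by norm_num)).trans ?_
  rw [Pquot]
  have : u + (1/2 : ℝ) • (-u) = (1/2 : ℝ) • u := by module
  rw [this, norm_smul, hu]
  norm_num

/-- Existence of a norming functional attaining the one-sided derivative in direction `z`. -/
lemma exists_functional (u z : Z) (hu : ‖u‖ = 1) (hz : z ≠ 0) :
    ∃ φ : StrongDual ℝ Z, ‖φ‖ = 1 ∧ φ u = 1 ∧ φ z = Pfun u z := by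
  set f := LinearPMap.mkSpanSingleton (K := ℝ) (σ := RingHom.id ℝ) z (Pfun u z) hz with hf_def
  have hf : ∀ x : f.domain, f x ≤ Pfun u (x : Z) := by
    rintro ⟨x, hx⟩
    obtain ⟨c, rfl⟩ := Submodule.mem_span_singleton.1 hx
    have happ : f ⟨c • z, hx⟩ = c • Pfun u z := LinearPMap.mkSpanSingleton'_apply _ _ _ c _
    rw [happ]
    show c • Pfun u z ≤ Pfun u (c • z)
    rcases lt_trichotomy c 0 with h | h | h
    · have hcz : c • z = (-c) • (-z) := by module
      rw [hcz, Pfun_smul u (-z) hu (by linarith)]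
      have hsum := Pfun_neg_add_nonneg u z hu
      have : c • Pfun u z = c * Pfun u z := rfl
      nlinarith
    · subst h
      simp only [zero_smul, smul_eq_mul, zero_mul]
      exact Pfun_zero_nonneg u hu
    · rw [Pfun_smul u z hu h]
      rfl
  obtain ⟨g, hg1, hg2⟩ := exists_extension_of_le_sublinear f (Pfun u)
    (fun c hc x => Pfun_smul u x hu hc) (fun x y => Pfun_add u x y hu) hf
  have hb : ∀ x, |g x| ≤ ‖x‖ := by
    intro x
    rw [abs_le]
    constructor
    · have h1 := (hg2 (-x)).trans (Pfun_le_norm u (-x) hu)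
      rw [map_neg, norm_neg] at h1
      linarith
    · exact (hg2 x).trans (Pfun_le_norm u x hu)
  let φ : StrongDual ℝ Z := LinearMap.mkContinuous g 1 (fun x => by
    rw [Real.norm_eq_abs, one_mul]; exact hb x)
  have hφ_apply : ∀ x, φ x = g x := fun x => rfl
  have hφu : φ u = 1 := by
    rw [hφ_apply]
    have h1 : g u ≤ 1 := (hg2 u).trans (Pfun_u_le u hu)
    have h2 : g (-u) ≤ -1 := (hg2 (-u)).trans (Pfun_neg_u_le u hu)
    rw [map_neg] at h2
    linarith
  have hφz : φ z = Pfun u z := by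
    rw [hφ_apply]
    have hmem : z ∈ f.domain := Submodule.mem_span_singleton_self z
    have := hg1 ⟨z, hmem⟩
    rw [LinearPMap.mkSpanSingleton_apply ℝ ℝ hz (Pfun u z)] at this
    exact this
  have hφn : ‖φ‖ = 1 := by
    refine le_antisymm (LinearMap.mkContinuous_norm_le g one_pos.le _) ?_
    calc (1:ℝ) = |φ u| := by rw [hφu]; norm_num
      _ = ‖φ u‖ := (Real.norm_eq_abs _).symm
      _ ≤ ‖φ‖ * ‖u‖ := φ.le_opNorm u
      _ = ‖φ‖ := by rw [hu, mul_one]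
  exact ⟨φ, hφn, hφu, hφz⟩

lemma vRad_bddAbove (u z : Z) :
    BddAbove {r : ℝ | ∃ φ : StrongDual ℝ Z, ‖φ‖ = 1 ∧ φ u = 1 ∧ |φ z| = r} := by
  refine ⟨‖z‖, ?_⟩
  rintro r ⟨φ, h1, _, rfl⟩
  calc |φ z| = ‖φ z‖ := (Real.norm_eq_abs _).symm
    _ ≤ ‖φ‖ * ‖z‖ := φ.le_opNorm z
    _ = ‖z‖ := by rw [h1, one_mul]

end Aux

theorem stmt5 {Z : Type*} [NormedAddCommGroup Z] [NormedSpace ℝ Z] [CompleteSpace Z]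
    (u : Z) (hu : ‖u‖ = 1) (l : ℝ) (hl0 : 0 < l) (hl1 : l ≤ 1) :
    l ≤ nInd u ↔ ∀ z : Z, 1 + l * ‖z‖ ≤ max ‖u + z‖ ‖u - z‖ := by
  have hu0 : u ≠ 0 := by intro h; rw [h, norm_zero] at hu; norm_num at hu
  -- the defining set of vRad is nonempty
  obtain ⟨φ₀, hφ₀n, hφ₀u⟩ := exists_dual_vector ℝ u (norm_ne_zero_iff.2 hu0)
  rw [hu] at hφ₀u
  have hne : ∀ z : Z, {r : ℝ | ∃ φ : StrongDual ℝ Z, ‖φ‖ = 1 ∧ φ u = 1 ∧ |φ z| = r}.Nonempty :=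
    fun z => ⟨|φ₀ z|, φ₀, hφ₀n, hφ₀u, rfl⟩
  have hvRad_nonneg : ∀ z : Z, 0 ≤ vRad u z := by
    intro z
    calc (0:ℝ) ≤ |φ₀ z| := abs_nonneg _
      _ ≤ vRad u z := le_csSup (vRad_bddAbove u z) ⟨φ₀, hφ₀n, hφ₀u, rfl⟩
  constructor
  · -- forward
    intro h z
    rcases eq_or_ne z 0 with rfl | hz
    · simp [hu]
    · set w : Z := ‖z‖⁻¹ • z with hw_def
      have hznorm : (0:ℝ) < ‖z‖ := norm_pos_iff.2 hz
      have hwnorm : ‖w‖ = 1 := by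
        rw [hw_def, norm_smul, Real.norm_eq_abs, abs_of_pos (by positivity)]
        field_simp
      have hvw : l ≤ vRad u w := by
        have hmem : vRad u w ∈ {r : ℝ | ∃ z : Z, ‖z‖ = 1 ∧ vRad u z = r} := ⟨w, hwnorm, rfl⟩
        have hbdd : BddBelow {r : ℝ | ∃ z : Z, ‖z‖ = 1 ∧ vRad u z = r} := by
          refine ⟨0, ?_⟩
          rintro r ⟨z', _, rfl⟩
          exact hvRad_nonneg z'
        exact h.trans (csInf_le hbdd hmem)
      refine le_of_forall_pos_le_add ?_
      intro ε hε
      have hε' : 0 < ε / ‖z‖ := by positivity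
      have hlt : l - ε / ‖z‖ < vRad u w := lt_of_lt_of_le (by linarith) hvw
      obtain ⟨r, hrmem, hrlt⟩ := exists_lt_of_lt_csSup (hne w) hlt
      obtain ⟨φ, hφn, hφu, rfl⟩ := hrmem
      have hzw : z = ‖z‖ • w := by
        rw [hw_def, smul_smul, mul_inv_cancel₀ hznorm.ne', one_smul]
      have hφzw : φ z = ‖z‖ * φ w := by
        conv_lhs => rw [hzw]
        rw [map_smul, smul_eq_mul]
      have habs : (l - ε / ‖z‖) * ‖z‖ < |φ z| := by
        rw [hφzw, abs_mul, abs_of_pos hznorm]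
        calc (l - ε / ‖z‖) * ‖z‖ < |φ w| * ‖z‖ := by
              apply mul_lt_mul_of_pos_right hrlt hznorm
          _ = ‖z‖ * |φ w| := mul_comm _ _
      have hmax : 1 + |φ z| ≤ max ‖u + z‖ ‖u - z‖ := by
        rcases le_or_gt 0 (φ z) with hs | hs
        · calc 1 + |φ z| = φ (u + z) := by
                rw [map_add, hφu, abs_of_nonneg hs]
            _ ≤ |φ (u + z)| := le_abs_self _
            _ = ‖φ (u + z)‖ := (Real.norm_eq_abs _).symm
            _ ≤ ‖φ‖ * ‖u + z‖ := φ.le_opNorm _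
            _ = ‖u + z‖ := by rw [hφn, one_mul]
            _ ≤ max ‖u + z‖ ‖u - z‖ := le_max_left _ _
        · calc 1 + |φ z| = φ (u - z) := by
                rw [map_sub, hφu, abs_of_neg hs]; ring
            _ ≤ |φ (u - z)| := le_abs_self _
            _ = ‖φ (u - z)‖ := (Real.norm_eq_abs _).symm
            _ ≤ ‖φ‖ * ‖u - z‖ := φ.le_opNorm _
            _ = ‖u - z‖ := by rw [hφn, one_mul]
            _ ≤ max ‖u + z‖ ‖u - z‖ := le_max_right _ _
      have : (l - ε / ‖z‖) * ‖z‖ = l * ‖z‖ - ε := by field_simp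
      linarith
  · -- reverse
    intro h
    refine le_csInf ⟨vRad u u, u, hu, rfl⟩ ?_
    rintro r ⟨z, hz1, rfl⟩
    have hz0 : z ≠ 0 := by intro hzz; rw [hzz, norm_zero] at hz1; norm_num at hz1
    -- Step 1 : l ≤ max (Pfun u z) (Pfun u (-z))
    have hstep1 : l ≤ max (Pfun u z) (Pfun u (-z)) := by
      by_contra hcon
      push_neg at hcon
      rw [max_lt_iff] at hcon
      obtain ⟨h1, h2⟩ := hcon
      obtain ⟨r1, ⟨t1, ht1, rfl⟩, hr1⟩ := exists_lt_of_csInf_lt (Pquot_nonempty u z) h1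
      obtain ⟨r2, ⟨t2, ht2, rfl⟩, hr2⟩ := exists_lt_of_csInf_lt (Pquot_nonempty u (-z)) h2
      set t := min t1 t2 with ht_def
      have ht : 0 < t := lt_min ht1 ht2
      have hq1 : Pquot u z t < l :=
        lt_of_le_of_lt (Pquot_mono u z hu ht (min_le_left _ _)) hr1
      have hq2 : Pquot u (-z) t < l :=
        lt_of_le_of_lt (Pquot_mono u (-z) hu ht (min_le_right _ _)) hr2
      have hmax := h (t • z)
      have htz : ‖t • z‖ = t := by
        rw [norm_smul, Real.norm_eq_abs, abs_of_pos ht, hz1, mul_one]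
      rw [htz] at hmax
      have hneg : u - t • z = u + t • (-z) := by module
      rw [hneg] at hmax
      rcases max_le_iff.1 (le_refl (max ‖u + t • z‖ ‖u + t • (-z)‖)) with ⟨_, _⟩
      rcases le_max_iff.1 hmax with hc | hc
      · have : l ≤ Pquot u z t := by
          rw [Pquot, le_div_iff₀ ht]; linarith
        linarith
      · have : l ≤ Pquot u (-z) t := by
          rw [Pquot, le_div_iff₀ ht]; linarith
        linarith
    -- Step 2 : produce a functional
    rcases le_max_iff.1 hstep1 with hP | hP
    · obtain ⟨φ, hφn, hφu, hφz⟩ := exists_functional u z hu hz0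
      have : l ≤ |φ z| := by
        rw [hφz]
        exact hP.trans (le_abs_self _)
      exact this.trans (le_csSup (vRad_bddAbove u z) ⟨φ, hφn, hφu, rfl⟩)
    · obtain ⟨φ, hφn, hφu, hφz⟩ := exists_functional u (-z) hu (neg_ne_zero.2 hz0)
      have : l ≤ |φ z| := by
        have : |φ z| = |φ (-z)| := by rw [map_neg, abs_neg]
        rw [this, hφz]
        exact hP.trans (le_abs_self _)
      exact this.trans (le_csSup (vRad_bddAbove u z) ⟨φ, hφn, hφu, rfl⟩)
end

section
/- Let Z be a real Banach space with dim Z ≥ 2. Then there exists u ∈ S_Z with n(Z,u) = 0; that is, 0 belongs to the set N(Z) = { n(Z,u) : u ∈ S_Z }. -/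
open NormedSpace

/-- At a point of differentiability of the norm, the norming functional is unique:
it equals the derivative of the norm. -/
lemma norming_eq_fderiv {E : Type*} [NormedAddCommGroup E] [NormedSpace ℝ E] {x : E}
    (h : DifferentiableAt ℝ (‖·‖) x) {ψ : E →L[ℝ] ℝ}
    (hψ : ∀ y : E, ψ y ≤ ‖y‖) (hx : ψ x = ‖x‖) :
    ψ = fderiv ℝ (‖·‖) x := by
  have key : ∀ y : E, ψ y ≤ fderiv ℝ (‖·‖) x y := by
    intro y
    -- the function t ↦ ‖x + t • y‖ has derivative `fderiv ℝ (‖·‖) x y` at 0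
    have hline : HasDerivAt (fun t : ℝ => x + t • y) y 0 := by
      simpa using ((hasDerivAt_id (0:ℝ)).smul_const y).const_add x
    have hx' : HasFDerivAt (‖·‖) (fderiv ℝ (‖·‖) x) ((fun t : ℝ => x + t • y) 0) := by
      simpa using h.hasFDerivAt
    have hg : HasDerivAt (fun t : ℝ => ‖x + t • y‖) (fderiv ℝ (‖·‖) x y) 0 :=
      hx'.comp_hasDerivAt 0 hline
    have hslope := hasDerivAt_iff_tendsto_slope.1 hg
    have hmono : Filter.Tendsto (slope (fun t : ℝ => ‖x + t • y‖) 0) (nhdsWithin 0 (Set.Ioi 0))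
        (nhds (fderiv ℝ (‖·‖) x y)) :=
      hslope.mono_left (nhdsWithin_mono _ (fun t ht => by
        simpa using (ne_of_gt (Set.mem_Ioi.1 ht))))
    refine ge_of_tendsto hmono ?_
    filter_upwards [self_mem_nhdsWithin] with t ht
    rw [Set.mem_Ioi] at ht
    have h1 : ψ x + t * ψ y ≤ ‖x + t • y‖ := by
      calc ψ x + t * ψ y = ψ (x + t • y) := by simp [map_add, map_smul, smul_eq_mul]
        _ ≤ ‖x + t • y‖ := hψ _
    rw [slope_def_field]
    have : ψ y ≤ (‖x + t • y‖ - ‖x‖) / t := by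
      rw [le_div_iff₀ ht]
      nlinarith [h1, hx]
    simpa [slope_def_field] using this
  ext y
  have h1 := key y
  have h2 := key (-y)
  simp only [map_neg] at h2
  have : fderiv ℝ (‖·‖) x y ≤ ψ y := by linarith
  exact le_antisymm h1 this

theorem stmt6 {Z : Type*} [NormedAddCommGroup Z] [NormedSpace ℝ Z] [CompleteSpace Z]
    (hdim : 2 ≤ Module.rank ℝ Z) :
    ∃ u : Z, ‖u‖ = 1 ∧ nInd u = 0 := by
  -- find two linearly independent vectors
  have hrank1 : (1 : Cardinal) < Module.rank ℝ Z :=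
    lt_of_lt_of_le (by norm_num) hdim
  have hnt : Nontrivial Z := by
    rw [← rank_pos_iff_nontrivial (R := ℝ)]
    exact lt_trans (by norm_num) hrank1
  obtain ⟨v, hv⟩ := exists_ne (0 : Z)
  obtain ⟨w, hvw⟩ := exists_linearIndependent_pair_of_one_lt_rank hrank1 hv
  -- the 2-dimensional subspace
  set Y : Submodule ℝ Z := Submodule.span ℝ (Set.range ![v, w]) with hY
  haveI : FiniteDimensional ℝ Y := by
    apply FiniteDimensional.span_of_finite
    exact Set.finite_range _
  have hfinrank : Module.finrank ℝ Y = 2 := by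
    rw [hY, finrank_span_eq_card hvw]
    simp
  haveI : Nontrivial Y := by
    apply Module.nontrivial_of_finrank_pos (R := ℝ)
    omega
  -- a point of differentiability of the norm on Y
  obtain ⟨x, hx⟩ : {p : Y | DifferentiableAt ℝ (‖·‖) p}.Nonempty :=
    (dense_differentiableAt_norm).nonempty
  have hx0 : x ≠ 0 := fun h0 => not_differentiableAt_norm_zero Y (h0 ▸ hx)
  set f : Y →L[ℝ] ℝ := fderiv ℝ (‖·‖) x with hf
  have hfx : f x = ‖x‖ := hx.fderiv_norm_self
  -- a nonzero vector in the kernel of f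
  obtain ⟨z₀, hz₀ne, hz₀ker⟩ : ∃ z₀ : Y, z₀ ≠ 0 ∧ f z₀ = 0 := by
    by_contra hcon
    push_neg at hcon
    have hinj : Function.Injective (f : Y →ₗ[ℝ] ℝ) := by
      rw [← LinearMap.ker_eq_bot, LinearMap.ker_eq_bot']
      intro m hm
      by_contra hm0
      exact hcon m hm0 hm
    have := LinearMap.finrank_le_finrank_of_injective hinj
    rw [hfinrank, Module.finrank_self] at this
    omega
  -- norms
  have hxZ : ‖(x : Z)‖ = ‖x‖ := rfl
  have hxn : ‖x‖ ≠ 0 := norm_ne_zero_iff.mpr hx0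
  have hz₀n : ‖z₀‖ ≠ 0 := norm_ne_zero_iff.mpr hz₀ne
  set u : Z := ‖x‖⁻¹ • (x : Z) with hu
  set z : Z := ‖z₀‖⁻¹ • (z₀ : Z) with hz
  have hu1 : ‖u‖ = 1 := by
    rw [hu, norm_smul, norm_inv, norm_norm, hxZ, inv_mul_cancel₀ hxn]
  have hz1 : ‖z‖ = 1 := by
    rw [hz, norm_smul, norm_inv, norm_norm]
    show ‖z₀‖⁻¹ * ‖z₀‖ = 1
    exact inv_mul_cancel₀ hz₀n
  have hu0 : u ≠ 0 := by
    intro h0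
    rw [h0, norm_zero] at hu1
    norm_num at hu1
  -- every norming functional of u kills z
  have hkill : ∀ φ : StrongDual ℝ Z, ‖φ‖ = 1 → φ u = 1 → φ z = 0 := by
    intro φ hφn hφu
    set ψ : Y →L[ℝ] ℝ := φ.comp Y.subtypeL with hψdef
    have hψle : ∀ y : Y, ψ y ≤ ‖y‖ := by
      intro y
      calc ψ y = φ (y : Z) := rfl
        _ ≤ |φ (y : Z)| := le_abs_self _
        _ = ‖φ (y : Z)‖ := rfl
        _ ≤ ‖φ‖ * ‖(y : Z)‖ := φ.le_opNorm _
        _ = ‖y‖ := by rw [hφn, one_mul]; rfl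
    have hψx : ψ x = ‖x‖ := by
      have : φ u = ‖x‖⁻¹ * φ (x : Z) := by rw [hu, map_smul, smul_eq_mul]
      have h2 : ‖x‖⁻¹ * φ (x : Z) = 1 := by rw [← this, hφu]
      rw [inv_mul_eq_one₀ hxn] at h2
      have : φ (x : Z) = ‖x‖ := h2.symm
      simpa [hψdef] using this
    have heq : ψ = f := norming_eq_fderiv hx hψle hψx
    have hφz₀ : φ (z₀ : Z) = 0 := by
      have : ψ z₀ = 0 := heq ▸ hz₀ker
      simpa [hψdef] using this
    rw [hz, map_smul, smul_eq_mul, hφz₀, mul_zero]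
  -- a norming functional exists
  obtain ⟨g, hgn, hgu⟩ := exists_dual_vector ℝ u (norm_ne_zero_iff.mpr hu0)
  rw [hu1] at hgu
  -- vRad u z = 0
  have hvz : vRad u z = 0 := by
    have hset : {r : ℝ | ∃ φ : StrongDual ℝ Z, ‖φ‖ = 1 ∧ φ u = 1 ∧ |φ z| = r} = {0} := by
      ext r
      constructor
      · rintro ⟨φ, hφn, hφu, rfl⟩
        simp [hkill φ hφn hφu]
      · rintro rfl
        exact ⟨g, hgn, hgu, by simp [hkill g hgn hgu]⟩
    rw [vRad, hset, csSup_singleton]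
  -- vRad is nonnegative on unit vectors
  have hnonneg : ∀ r ∈ {r : ℝ | ∃ z' : Z, ‖z'‖ = 1 ∧ vRad u z' = r}, 0 ≤ r := by
    rintro r ⟨z', hz'1, rfl⟩
    have hbdd : BddAbove {r : ℝ | ∃ φ : StrongDual ℝ Z, ‖φ‖ = 1 ∧ φ u = 1 ∧ |φ z'| = r} := by
      refine ⟨1, ?_⟩
      rintro r ⟨φ, hφn, hφu, rfl⟩
      calc |φ z'| = ‖φ z'‖ := rfl
        _ ≤ ‖φ‖ * ‖z'‖ := φ.le_opNorm _
        _ = 1 := by rw [hφn, hz'1, one_mul]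
    have hmem : |g z'| ∈ {r : ℝ | ∃ φ : StrongDual ℝ Z, ‖φ‖ = 1 ∧ φ u = 1 ∧ |φ z'| = r} :=
      ⟨g, hgn, hgu, rfl⟩
    calc (0:ℝ) ≤ |g z'| := abs_nonneg _
      _ ≤ vRad u z' := le_csSup hbdd hmem
  -- conclusion
  refine ⟨u, hu1, ?_⟩
  have hmem0 : (0:ℝ) ∈ {r : ℝ | ∃ z' : Z, ‖z'‖ = 1 ∧ vRad u z' = r} := ⟨z, hz1, hvz⟩
  exact le_antisymm (csInf_le ⟨0, hnonneg⟩ hmem0) (le_csInf ⟨0, hmem0⟩ hnonneg)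
end

section
/- Let Z be a finite-dimensional real Banach space. Then the set { u ∈ S_Z : n(Z,u) > 0 } is countable, and consequently the set N(Z) = { n(Z,u) : u ∈ S_Z } is countable. -/
open NormedSpace

section Aux

variable {Z : Type*} [NormedAddCommGroup Z] [NormedSpace ℝ Z]

lemma vRad_nonneg (u z : Z) : 0 ≤ vRad u z := by
  apply Real.sSup_nonneg
  rintro r ⟨φ, -, -, h⟩
  rw [← h]; positivity

lemma nInd_nonneg (u : Z) : 0 ≤ nInd u := by
  apply Real.sInf_nonneg
  rintro r ⟨z, -, h⟩
  rw [← h]; exact vRad_nonneg u z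

/-- If the numerical index at `u` is positive, any vector annihilated by the whole face of `u`
is zero. -/
lemma face_ann_eq_zero {u : Z} (hu : ‖u‖ = 1) (h : 0 < nInd u) {z : Z}
    (hz : ∀ φ : StrongDual ℝ Z, ‖φ‖ = 1 → φ u = 1 → φ z = 0) : z = 0 := by
  by_contra hz0
  have hzn : ‖z‖ ≠ 0 := norm_ne_zero_iff.mpr hz0
  set w : Z := ‖z‖⁻¹ • z with hw_def
  have hw : ‖w‖ = 1 := by
    rw [hw_def, norm_smul, norm_inv, norm_norm, inv_mul_cancel₀ hzn]
  have hu0 : u ≠ 0 := by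
    intro h0; rw [h0, norm_zero] at hu; exact one_ne_zero hu.symm
  obtain ⟨φ₀, hφ₀n, hφ₀u⟩ := exists_dual_vector ℝ u (norm_ne_zero_iff.mpr hu0)
  have hφ₀u' : φ₀ u = 1 := by simpa [hu] using hφ₀u
  have hset : {r : ℝ | ∃ φ : StrongDual ℝ Z, ‖φ‖ = 1 ∧ φ u = 1 ∧ |φ w| = r} = {0} := by
    ext r
    constructor
    · rintro ⟨φ, h1, h2, h3⟩
      have : φ w = ‖z‖⁻¹ * φ z := by simp [hw_def]
      rw [hz φ h1 h2, mul_zero] at this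
      simp [← h3, this]
    · rintro rfl
      refine ⟨φ₀, hφ₀n, hφ₀u', ?_⟩
      have : φ₀ w = ‖z‖⁻¹ * φ₀ z := by simp [hw_def]
      rw [hz φ₀ hφ₀n hφ₀u', mul_zero] at this
      simp [this]
  have hvr : vRad u w = 0 := by
    rw [vRad, hset, csSup_singleton]
  have hle : nInd u ≤ 0 := by
    apply csInf_le
    · exact ⟨0, by rintro r ⟨z', -, h'⟩; rw [← h']; exact vRad_nonneg u z'⟩
    · exact ⟨w, hw, hvr⟩
  linarith

variable [FiniteDimensional ℝ Z]

/-- The cone of functionals attaining their norm at `u` contains a ball, if `nInd u > 0`. -/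
lemma exists_ball_subset_cone {u : Z} (hu : ‖u‖ = 1) (h : 0 < nInd u) :
    ∃ ψ : StrongDual ℝ Z, ∃ ε : ℝ, 0 < ε ∧
      Metric.ball ψ ε ⊆ {χ : StrongDual ℝ Z | χ u = ‖χ‖} := by
  set K : Set (StrongDual ℝ Z) := {χ : StrongDual ℝ Z | χ u = ‖χ‖} with hK_def
  have hKle : ∀ χ : StrongDual ℝ Z, χ u ≤ ‖χ‖ := by
    intro χ
    calc χ u ≤ |χ u| := le_abs_self _
    _ = ‖χ u‖ := (Real.norm_eq_abs _).symm
    _ ≤ ‖χ‖ * ‖u‖ := χ.le_opNorm u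
    _ = ‖χ‖ := by rw [hu, mul_one]
  have hK0 : (0 : StrongDual ℝ Z) ∈ K := by simp [hK_def]
  have hconv : Convex ℝ K := by
    rintro χ₁ h₁ χ₂ h₂ a b ha hb hab
    have hle1 : (a • χ₁ + b • χ₂) u ≤ ‖a • χ₁ + b • χ₂‖ := hKle _
    have hge : ‖a • χ₁ + b • χ₂‖ ≤ (a • χ₁ + b • χ₂) u := by
      calc ‖a • χ₁ + b • χ₂‖ ≤ ‖a • χ₁‖ + ‖b • χ₂‖ := norm_add_le _ _
      _ = a * ‖χ₁‖ + b * ‖χ₂‖ := by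
          rw [norm_smul, norm_smul, Real.norm_eq_abs, Real.norm_eq_abs,
            abs_of_nonneg ha, abs_of_nonneg hb]
      _ = a * (χ₁ u) + b * (χ₂ u) := by rw [← h₁, ← h₂]
      _ = (a • χ₁ + b • χ₂) u := by simp
    exact le_antisymm hle1 hge
  -- The cone spans the dual space
  have hspan : Submodule.span ℝ K = ⊤ := by
    by_contra hne
    have hlt : Submodule.span ℝ K < ⊤ := lt_top_iff_ne_top.mpr hne
    set E : (Z →ₗ[ℝ] ℝ) ≃ₗ[ℝ] (Z →L[ℝ] ℝ) := LinearMap.toContinuousLinearMap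
    set W : Subspace ℝ (Module.Dual ℝ Z) :=
      (Submodule.span ℝ K).map (E.symm : (Z →L[ℝ] ℝ) →ₗ[ℝ] (Z →ₗ[ℝ] ℝ)) with hW_def
    have hWrank : Module.finrank ℝ W < Module.finrank ℝ Z := by
      have h1 : Module.finrank ℝ W = Module.finrank ℝ (Submodule.span ℝ K) := by
        rw [hW_def]
        exact LinearEquiv.finrank_map_eq E.symm _
      have h2 : Module.finrank ℝ (Submodule.span ℝ K) < Module.finrank ℝ (StrongDual ℝ Z) :=
        Submodule.finrank_lt hlt.ne
      have h3 : Module.finrank ℝ (StrongDual ℝ Z) = Module.finrank ℝ (Module.Dual ℝ Z) :=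
        LinearEquiv.finrank_eq E.symm
      have h4 : Module.finrank ℝ (Module.Dual ℝ Z) = Module.finrank ℝ Z :=
        Subspace.dual_finrank_eq
      rw [h1]
      exact lt_of_lt_of_eq h2 (h3.trans h4)
    have hco : W.dualCoannihilator ≠ ⊥ := by
      intro hbot
      have := Subspace.finrank_add_finrank_dualCoannihilator_eq W
      rw [hbot, finrank_bot] at this
      omega
    obtain ⟨z, hzW, hz0⟩ := Submodule.exists_mem_ne_zero_of_ne_bot hco
    refine hz0 (face_ann_eq_zero hu h ?_)
    intro φ hφn hφu
    have hφK : φ ∈ K := by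
      rw [hK_def]; simp only [Set.mem_setOf_eq, hφu, hφn]
    have hφW : (E.symm φ : Module.Dual ℝ Z) ∈ W := by
      exact Submodule.mem_map_of_mem (Submodule.subset_span hφK)
    have := (Submodule.mem_dualCoannihilator z).mp hzW _ hφW
    exact this
  -- Hence it has nonempty interior
  have haff : affineSpan ℝ K = ⊤ := by
    rw [← (affineSpan ℝ K).coe_eq_univ_iff]
    have : (insert (0 : StrongDual ℝ Z) K) = K := Set.insert_eq_self.mpr hK0
    calc (affineSpan ℝ K : Set (StrongDual ℝ Z)) = affineSpan ℝ (insert 0 K) := by rw [this]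
    _ = (Submodule.span ℝ K : Set (StrongDual ℝ Z)) := affineSpan_insert_zero K
    _ = Set.univ := by rw [hspan]; rfl
  obtain ⟨ψ, hψ⟩ := (hconv.interior_nonempty_iff_affineSpan_eq_top).mpr haff
  obtain ⟨ε, hε, hball⟩ := Metric.mem_nhds_iff.mp (mem_interior_iff_mem_nhds.mp hψ)
  exact ⟨ψ, ε, hε, hball⟩

end Aux

theorem stmt8 {Z : Type*} [NormedAddCommGroup Z] [NormedSpace ℝ Z] [FiniteDimensional ℝ Z] :
    {u : Z | ‖u‖ = 1 ∧ 0 < nInd u}.Countable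
    ∧ {r : ℝ | ∃ u : Z, ‖u‖ = 1 ∧ nInd u = r}.Countable := by
  set S := {u : Z | ‖u‖ = 1 ∧ 0 < nInd u} with hS_def
  have hS : S.Countable := by
    have hex : ∀ u ∈ S, ∃ ψ : StrongDual ℝ Z, ∃ ε : ℝ, 0 < ε ∧
        Metric.ball ψ ε ⊆ {χ : StrongDual ℝ Z | χ u = ‖χ‖} := fun u hu =>
      exists_ball_subset_cone hu.1 hu.2
    choose! ψ ε hε hball using hex
    apply Set.PairwiseDisjoint.countable_of_isOpen
      (s := fun u => Metric.ball (ψ u) (ε u)) (a := S)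
    · -- pairwise disjoint
      intro u hu v hv huv
      rw [Function.onFun, Set.disjoint_left]
      intro χ hχu hχv
      -- χ lies in both cones
      have hcu : χ u = ‖χ‖ := hball u hu hχu
      have hcv : χ v = ‖χ‖ := hball v hv hχv
      have huv0 : u - v ≠ 0 := sub_ne_zero.mpr huv
      obtain ⟨χ₀, hχ₀n, hχ₀uv⟩ := exists_dual_vector ℝ (u - v) (norm_ne_zero_iff.mpr huv0)
      have hχ₀uv' : χ₀ (u - v) = ‖u - v‖ := by simpa using hχ₀uv
      set δ : ℝ := min (ε u - dist χ (ψ u)) (ε v - dist χ (ψ v)) with hδ_def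
      have hδ : 0 < δ := by
        apply lt_min
        · simpa [sub_pos] using Metric.mem_ball.mp hχu
        · simpa [sub_pos] using Metric.mem_ball.mp hχv
      set χ' : StrongDual ℝ Z := χ + (δ / 2) • χ₀ with hχ'_def
      have hdist : ∀ w : StrongDual ℝ Z, dist χ' w ≤ dist χ w + δ / 2 := by
        intro w
        calc dist χ' w ≤ dist χ' χ + dist χ w := dist_triangle _ _ _
        _ ≤ δ / 2 + dist χ w := by
            apply add_le_add_left
            rw [hχ'_def, dist_eq_norm]
            simp only [add_sub_cancel_left]
            rw [norm_smul, Real.norm_eq_abs, abs_of_pos (by linarith), hχ₀n, mul_one]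
        _ = dist χ w + δ / 2 := by ring
      have hχ'u : χ' ∈ Metric.ball (ψ u) (ε u) := by
        rw [Metric.mem_ball]
        have := hdist (ψ u)
        have h1 : δ ≤ ε u - dist χ (ψ u) := min_le_left _ _
        linarith
      have hχ'v : χ' ∈ Metric.ball (ψ v) (ε v) := by
        rw [Metric.mem_ball]
        have := hdist (ψ v)
        have h1 : δ ≤ ε v - dist χ (ψ v) := min_le_right _ _
        linarith
      have hcu' : χ' u = ‖χ'‖ := hball u hu hχ'u
      have hcv' : χ' v = ‖χ'‖ := hball v hv hχ'v
      have h0 : χ' (u - v) = 0 := by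
        rw [map_sub, hcu', hcv', sub_self]
      have h1 : χ (u - v) = 0 := by
        rw [map_sub, hcu, hcv, sub_self]
      rw [hχ'_def] at h0
      simp only [ContinuousLinearMap.add_apply, ContinuousLinearMap.coe_smul',
        Pi.smul_apply, smul_eq_mul, h1, hχ₀uv', zero_add] at h0
      have : ‖u - v‖ ≠ 0 := norm_ne_zero_iff.mpr huv0
      have : δ / 2 * ‖u - v‖ > 0 := by positivity
      linarith
    · intro u _; exact Metric.isOpen_ball
    · intro u hu; exact ⟨ψ u, Metric.mem_ball_self (hε u hu)⟩
  refine ⟨hS, ?_⟩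
  have hsub : {r : ℝ | ∃ u : Z, ‖u‖ = 1 ∧ nInd u = r} ⊆ insert 0 (nInd '' S) := by
    rintro r ⟨u, hun, hur⟩
    rcases lt_or_eq_of_le (nInd_nonneg u) with hpos | hzero
    · exact Set.mem_insert_of_mem _ ⟨u, ⟨hun, hpos⟩, hur⟩
    · left; rw [← hur, ← hzero]
  exact Set.Countable.mono hsub ((hS.image _).insert 0)
end

section
/- Let H be a real Hilbert space of dimension at least 2. Then for every Banach space Y and every norm-one operator G ∈ L(H, Y), the numerical index n_G(H, Y) is 0; and for every Banach space X and every norm-one G ∈ L(X, H), n_G(X, H) = 0. -/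
open NormedSpace

/-- Arithmetic helper: if `1 + t*a ≤ √(1+C t²)` for all `t`, then `a = 0`. -/
lemma aux_a_eq_zero (C a : ℝ) (hC : 0 ≤ C)
    (h : ∀ t : ℝ, 1 + t * a ≤ Real.sqrt (1 + C * t ^ 2)) : a = 0 := by
  have key : ∀ t : ℝ, t * a ≤ C * t ^ 2 / 2 := by
    intro t
    have h1 : Real.sqrt (1 + C * t ^ 2) ≤ 1 + C * t ^ 2 / 2 := by
      rw [show (1 : ℝ) + C * t ^ 2 / 2 = Real.sqrt ((1 + C * t ^ 2 / 2) ^ 2) from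
        (Real.sqrt_sq (by positivity)).symm]
      apply Real.sqrt_le_sqrt
      nlinarith [sq_nonneg (C * t ^ 2)]
    have := h t
    linarith
  rcases eq_or_lt_of_le hC with hC0 | hC0
  · have h1 := key 1
    have h2 := key (-1)
    rw [← hC0] at h1 h2
    nlinarith
  · have h1 := key (a / C)
    have : a / C * a = a ^ 2 / C := by ring
    rw [this] at h1
    have hne : C ≠ 0 := ne_of_gt hC0
    have h2 : C * (a / C) ^ 2 / 2 = a ^ 2 / C / 2 := by field_simp
    rw [h2] at h1
    have ha2 : a ^ 2 / C ≤ 0 := by linarith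
    have ha2' : 0 ≤ a ^ 2 / C := by positivity
    have h3 : a ^ 2 / C = 0 := le_antisymm ha2 ha2'
    have h4 : a ^ 2 = 0 := by
      field_simp at h3
      nlinarith [sq_nonneg a]
    exact pow_eq_zero_iff (n := 2) (by norm_num) |>.mp h4

/-- Key lemma: if `‖u + t • w‖ ≤ √(1 + C t²)` for all `t` and `φ` is a norming functional
of `u` with `‖φ‖ = 1`, `φ u = 1`, then `φ w = 0`. -/
lemma aux_phi_w_zero {Z : Type*} [NormedAddCommGroup Z] [NormedSpace ℝ Z]
    {u w : Z} {φ : StrongDual ℝ Z} (hφ : ‖φ‖ = 1) (hφu : φ u = 1) {C : ℝ} (hC : 0 ≤ C)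
    (hb : ∀ t : ℝ, ‖u + t • w‖ ≤ Real.sqrt (1 + C * t ^ 2)) : φ w = 0 := by
  apply aux_a_eq_zero C _ hC
  intro t
  have h1 : φ (u + t • w) = 1 + t * φ w := by
    rw [map_add, map_smul, hφu]; simp
  calc 1 + t * φ w = φ (u + t • w) := h1.symm
    _ ≤ ‖φ (u + t • w)‖ := le_abs_self _
    _ ≤ ‖φ‖ * ‖u + t • w‖ := φ.le_opNorm _
    _ = ‖u + t • w‖ := by rw [hφ, one_mul]
    _ ≤ Real.sqrt (1 + C * t ^ 2) := hb t

/-- Abstract lemma: if `‖u‖ = 1`, `w ≠ 0` and every norming functional of `u` kills `w`,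
then `nInd u = 0`. -/
lemma nInd_eq_zero_of {Z : Type*} [NormedAddCommGroup Z] [NormedSpace ℝ Z] [CompleteSpace Z]
    (u w : Z) (hu : ‖u‖ = 1) (hw : w ≠ 0)
    (h : ∀ φ : StrongDual ℝ Z, ‖φ‖ = 1 → φ u = 1 → φ w = 0) : nInd u = 0 := by
  have hune : u ≠ 0 := by
    intro h0; rw [h0, norm_zero] at hu; exact zero_ne_one hu
  obtain ⟨φ₀, hφ₀, hφ₀u⟩ := exists_dual_vector ℝ u (norm_ne_zero_iff.mpr hune)
  rw [hu] at hφ₀u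
  have hφ₀u : φ₀ u = 1 := by exact_mod_cast hφ₀u
  -- every vRad is nonneg
  have hvnonneg : ∀ z : Z, ‖z‖ = 1 → 0 ≤ vRad u z := by
    intro z hz
    have hmem : |φ₀ z| ∈ {r : ℝ | ∃ φ : StrongDual ℝ Z, ‖φ‖ = 1 ∧ φ u = 1 ∧ |φ z| = r} :=
      ⟨φ₀, hφ₀, hφ₀u, rfl⟩
    have hbdd : BddAbove {r : ℝ | ∃ φ : StrongDual ℝ Z, ‖φ‖ = 1 ∧ φ u = 1 ∧ |φ z| = r} := by
      refine ⟨1, fun r hr => ?_⟩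
      obtain ⟨φ, hφ, _, hr⟩ := hr
      calc r = |φ z| := hr.symm
        _ = ‖φ z‖ := rfl
        _ ≤ ‖φ‖ * ‖z‖ := φ.le_opNorm z
        _ = 1 := by rw [hφ, hz, one_mul]
    calc (0 : ℝ) ≤ |φ₀ z| := abs_nonneg _
      _ ≤ vRad u z := le_csSup hbdd hmem
  -- the normalized w has vRad 0
  set z₀ : Z := ‖w‖⁻¹ • w with hz₀def
  have hwnorm : ‖w‖ ≠ 0 := norm_ne_zero_iff.mpr hw
  have hz₀ : ‖z₀‖ = 1 := by
    rw [hz₀def, norm_smul, norm_inv, norm_norm, inv_mul_cancel₀ hwnorm]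
  have hvz₀ : vRad u z₀ = 0 := by
    have hset : {r : ℝ | ∃ φ : StrongDual ℝ Z, ‖φ‖ = 1 ∧ φ u = 1 ∧ |φ z₀| = r} = {0} := by
      ext r
      constructor
      · rintro ⟨φ, hφ, hφu, hr⟩
        have : φ z₀ = ‖w‖⁻¹ * φ w := by rw [hz₀def, map_smul]; simp
        rw [h φ hφ hφu, mul_zero] at this
        simp [← hr, this]
      · rintro rfl
        refine ⟨φ₀, hφ₀, hφ₀u, ?_⟩
        have : φ₀ z₀ = ‖w‖⁻¹ * φ₀ w := by rw [hz₀def, map_smul]; simp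
        rw [h φ₀ hφ₀ hφ₀u, mul_zero] at this
        simp [this]
    rw [vRad, hset, csSup_singleton]
  have h0mem : (0 : ℝ) ∈ {r : ℝ | ∃ z : Z, ‖z‖ = 1 ∧ vRad u z = r} := ⟨z₀, hz₀, hvz₀⟩
  refine le_antisymm ?_ ?_
  · exact csInf_le ⟨0, fun r hr => by obtain ⟨z, hz, hr⟩ := hr; rw [← hr]; exact hvnonneg z hz⟩
      h0mem
  · exact le_csInf ⟨0, h0mem⟩ fun r hr => by
      obtain ⟨z, hz, hr⟩ := hr; rw [← hr]; exact hvnonneg z hz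

section Hilbert

variable {H : Type*} [NormedAddCommGroup H] [InnerProductSpace ℝ H]

/-- Norm bound for `id + t • S` when `S` has zero numerical radius pointwise. -/
lemma aux_norm_id_add_smul (S : H →L[ℝ] H) (hS : ∀ z : H, (inner ℝ (S z) (z) : ℝ) = 0) (t : ℝ) :
    ‖ContinuousLinearMap.id ℝ H + t • S‖ ≤ Real.sqrt (1 + ‖S‖ ^ 2 * t ^ 2) := by
  apply ContinuousLinearMap.opNorm_le_bound _ (Real.sqrt_nonneg _)
  intro z
  have h1 : ‖z + t • S z‖ ^ 2 ≤ (1 + ‖S‖ ^ 2 * t ^ 2) * ‖z‖ ^ 2 := by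
    have := norm_add_sq_real z (t • S z)
    rw [real_inner_smul_right, real_inner_comm, hS, mul_zero] at this
    have hSz : ‖S z‖ ≤ ‖S‖ * ‖z‖ := S.le_opNorm z
    have h2 : ‖t • S z‖ ^ 2 = t ^ 2 * ‖S z‖ ^ 2 := by
      rw [norm_smul]; rw [Real.norm_eq_abs]; ring_nf; rw [sq_abs]; ring
    have h4 : ‖S z‖ ^ 2 ≤ (‖S‖ * ‖z‖) ^ 2 := by nlinarith [norm_nonneg (S z)]
    nlinarith [mul_le_mul_of_nonneg_left h4 (sq_nonneg t)]
  have h3 : ‖z + t • S z‖ ≤ Real.sqrt ((1 + ‖S‖ ^ 2 * t ^ 2) * ‖z‖ ^ 2) := by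
    rw [show ‖z + t • S z‖ = Real.sqrt (‖z + t • S z‖ ^ 2) from
      (Real.sqrt_sq (norm_nonneg _)).symm]
    exact Real.sqrt_le_sqrt h1
  calc ‖(ContinuousLinearMap.id ℝ H + t • S) z‖ = ‖z + t • S z‖ := by
        simp [ContinuousLinearMap.add_apply]
    _ ≤ Real.sqrt ((1 + ‖S‖ ^ 2 * t ^ 2) * ‖z‖ ^ 2) := h3
    _ = Real.sqrt (1 + ‖S‖ ^ 2 * t ^ 2) * ‖z‖ := by
        rw [Real.sqrt_mul (by positivity), Real.sqrt_sq (norm_nonneg z)]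

/-- The skew operator built from `x, y`. -/
noncomputable def skewOp (x y : H) : H →L[ℝ] H :=
  (innerSL ℝ x).smulRight y - (innerSL ℝ y).smulRight x

lemma skewOp_apply (x y z : H) : skewOp x y z = (inner ℝ (x) (z) : ℝ) • y - (inner ℝ (y) (z) : ℝ) • x := by
  simp [skewOp]

lemma skewOp_inner (x y : H) (z : H) : (inner ℝ (skewOp x y z) (z) : ℝ) = 0 := by
  rw [skewOp_apply, inner_sub_left, real_inner_smul_left, real_inner_smul_left]
  ring

/-- Existence of a nonzero vector orthogonal to a given one, when rank ≥ 2. -/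
lemma exists_orthogonal (hdim : 2 ≤ Module.rank ℝ H) (h : H) (hh : h ≠ 0) :
    ∃ y : H, y ≠ 0 ∧ (inner ℝ (h) (y) : ℝ) = 0 := by
  have hspan : (Submodule.span ℝ {h} : Submodule ℝ H) ≠ ⊤ := by
    intro htop
    have : Module.rank ℝ H ≤ 1 := by
      have := rank_span_le (R := ℝ) (M := H) ({h} : Set H)
      rw [htop] at this
      simpa using this.trans (Cardinal.mk_le_one_iff_set_subsingleton.mpr
        (Set.subsingleton_singleton))
    have : (2 : Cardinal) ≤ 1 := le_trans hdim this
    norm_num at this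
  obtain ⟨v, hv⟩ : ∃ v : H, v ∉ Submodule.span ℝ {h} := by
    by_contra hcon
    push_neg at hcon
    exact hspan (Submodule.eq_top_iff'.mpr hcon)
  refine ⟨v - ((inner ℝ (h) (v) : ℝ) / ‖h‖ ^ 2) • h, ?_, ?_⟩
  · intro h0
    apply hv
    rw [sub_eq_zero.mp h0]
    exact Submodule.smul_mem _ _ (Submodule.mem_span_singleton_self h)
  · rw [inner_sub_right, real_inner_smul_right, real_inner_self_eq_norm_sq]
    have hn : ‖h‖ ^ 2 ≠ 0 := pow_ne_zero 2 (norm_ne_zero_iff.mpr hh)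
    field_simp
    ring

end Hilbert

theorem stmt13 {H : Type*} [NormedAddCommGroup H] [InnerProductSpace ℝ H] [CompleteSpace H]
    (hdim : 2 ≤ Module.rank ℝ H) :
    (∀ (Y : Type*) [NormedAddCommGroup Y] [NormedSpace ℝ Y] [CompleteSpace Y]
        (G : H →L[ℝ] Y), ‖G‖ = 1 → nInd G = 0)
    ∧ (∀ (X : Type*) [NormedAddCommGroup X] [NormedSpace ℝ X] [CompleteSpace X]
        (G : X →L[ℝ] H), ‖G‖ = 1 → nInd G = 0) := by
  constructor
  · intro Y _ _ _ G hG
    have hGne : G ≠ 0 := by intro h0; rw [h0, norm_zero] at hG; exact zero_ne_one hG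
    obtain ⟨h, hh⟩ : ∃ h : H, G h ≠ 0 := by
      by_contra hcon
      push_neg at hcon
      exact hGne (ContinuousLinearMap.ext fun z => by rw [hcon]; rfl)
    have hhne : h ≠ 0 := fun h0 => hh (by rw [h0, map_zero])
    obtain ⟨y, hy, hyh⟩ := exists_orthogonal hdim h hhne
    set S : H →L[ℝ] H := skewOp h y with hSdef
    have hSskew : ∀ z : H, (inner ℝ (S z) (z) : ℝ) = 0 := fun z => skewOp_inner h y z
    set w : H →L[ℝ] Y := G.comp S with hwdef
    have hwne : w ≠ 0 := by
      intro h0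
      have : w y = 0 := by rw [h0]; rfl
      rw [hwdef] at this
      simp only [ContinuousLinearMap.comp_apply] at this
      rw [hSdef, skewOp_apply, hyh, zero_smul, zero_sub, map_neg, map_smul,
        neg_eq_zero] at this
      rcases smul_eq_zero.mp this with hc | hc
      · exact hy (inner_self_eq_zero.mp hc)
      · exact hh hc
    apply nInd_eq_zero_of G w hG hwne
    intro φ hφ hφG
    apply aux_phi_w_zero hφ hφG (C := ‖S‖ ^ 2) (by positivity)
    intro t
    have hcomp : G + t • w = G.comp (ContinuousLinearMap.id ℝ H + t • S) := by
      rw [hwdef]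
      ext z
      simp
    rw [hcomp]
    calc ‖G.comp (ContinuousLinearMap.id ℝ H + t • S)‖
        ≤ ‖G‖ * ‖ContinuousLinearMap.id ℝ H + t • S‖ := ContinuousLinearMap.opNorm_comp_le _ _
      _ = ‖ContinuousLinearMap.id ℝ H + t • S‖ := by rw [hG, one_mul]
      _ ≤ Real.sqrt (1 + ‖S‖ ^ 2 * t ^ 2) := aux_norm_id_add_smul S hSskew t
  · intro X _ _ _ G hG
    have hGne : G ≠ 0 := by intro h0; rw [h0, norm_zero] at hG; exact zero_ne_one hG
    obtain ⟨x₀, hx₀⟩ : ∃ x₀ : X, G x₀ ≠ 0 := by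
      by_contra hcon
      push_neg at hcon
      exact hGne (ContinuousLinearMap.ext fun z => by rw [hcon]; rfl)
    set h : H := G x₀ with hhdef
    obtain ⟨y, hy, hyh⟩ := exists_orthogonal hdim h hx₀
    set S : H →L[ℝ] H := skewOp h y with hSdef
    have hSskew : ∀ z : H, (inner ℝ (S z) (z) : ℝ) = 0 := fun z => skewOp_inner h y z
    set w : X →L[ℝ] H := S.comp G with hwdef
    have hwne : w ≠ 0 := by
      intro h0
      have : w x₀ = 0 := by rw [h0]; rfl
      rw [hwdef] at this
      simp only [ContinuousLinearMap.comp_apply] at this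
      have hyh' : (inner ℝ y h : ℝ) = 0 := by rw [real_inner_comm]; exact hyh
      rw [hSdef, skewOp_apply, ← hhdef, hyh', zero_smul, sub_zero] at this
      have hh2 : (inner ℝ (h) (h) : ℝ) ≠ 0 := fun hc => hx₀ (inner_self_eq_zero.mp hc)
      rcases smul_eq_zero.mp this with hc | hc
      · exact hh2 hc
      · exact hy hc
    apply nInd_eq_zero_of G w hG hwne
    intro φ hφ hφG
    apply aux_phi_w_zero hφ hφG (C := ‖S‖ ^ 2) (by positivity)
    intro t
    have hcomp : G + t • w = (ContinuousLinearMap.id ℝ H + t • S).comp G := by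
      rw [hwdef]
      ext z
      simp
    rw [hcomp]
    calc ‖(ContinuousLinearMap.id ℝ H + t • S).comp G‖
        ≤ ‖ContinuousLinearMap.id ℝ H + t • S‖ * ‖G‖ := ContinuousLinearMap.opNorm_comp_le _ _
      _ = ‖ContinuousLinearMap.id ℝ H + t • S‖ := by rw [hG, mul_one]
      _ ≤ Real.sqrt (1 + ‖S‖ ^ 2 * t ^ 2) := aux_norm_id_add_smul S hSskew t
end

section
/- Let Z be a Banach space, u ∈ S_Z, z ∈ Z, and C ⊆ B_{Z*} a subset whose weak-* closed convex hull is B_{Z*}. Then for every functional z₀* ∈ S_{Z*} with z₀*(u) = 1 and every δ > 0, there exists z* ∈ C such that Re z*(u) > 1 − δ and Re z*(z) > Re z₀*(z) − δ. -/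
open NormedSpace

theorem stmt17 {Z : Type*} [NormedAddCommGroup Z] [NormedSpace ℝ Z] [CompleteSpace Z]
    (u : Z) (hu : ‖u‖ = 1) (z : Z) (C : Set (StrongDual ℝ Z))
    (hC : C ⊆ Metric.closedBall 0 1)
    (hdense : closure (convexHull ℝ (StrongDual.toWeakDual '' C))
        = StrongDual.toWeakDual '' Metric.closedBall (0 : StrongDual ℝ Z) 1)
    (z₀ : StrongDual ℝ Z) (hz₀ : ‖z₀‖ = 1) (hz₀u : z₀ u = 1) (δ : ℝ) (hδ : 0 < δ) :
    ∃ φ ∈ C, 1 - δ < φ u ∧ z₀ z - δ < φ z := by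
  by_contra hcon
  push_neg at hcon
  set M : ℝ := 2 * ‖z‖ + δ with hMdef
  have hM : 0 < M := by positivity
  set δ' : ℝ := δ ^ 2 / (2 * (δ + M)) with hδ'def
  have hδ' : 0 < δ' := by positivity
  -- key numerical fact
  have hkey : δ' * (δ + M) = δ ^ 2 / 2 := by
    rw [hδ'def, div_mul_eq_mul_div, div_eq_iff (ne_of_gt (by linarith))]
    ring
  -- z₀ in the closure
  have hz₀mem : StrongDual.toWeakDual z₀ ∈ closure (convexHull ℝ (StrongDual.toWeakDual '' C)) := by
    rw [hdense]
    exact ⟨z₀, by simp [hz₀], rfl⟩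
  -- the open neighborhood
  have hVopen : IsOpen {w : WeakDual ℝ Z | 1 - δ' < w u ∧ z₀ z - δ' < w z} := by
    exact (isOpen_lt continuous_const (WeakDual.eval_continuous u)).inter
      (isOpen_lt continuous_const (WeakDual.eval_continuous z))
  have hz₀V : StrongDual.toWeakDual z₀ ∈ {w : WeakDual ℝ Z | 1 - δ' < w u ∧ z₀ z - δ' < w z} := by
    constructor
    · show (1 : ℝ) - δ' < z₀ u
      rw [hz₀u]; linarith
    · show z₀ z - δ' < z₀ z
      linarith
  obtain ⟨w, hwV, hwhull⟩ := mem_closure_iff.mp hz₀mem _ hVopen hz₀V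
  rw [convexHull_eq] at hwhull
  obtain ⟨ι, t, a, p, ha0, ha1, hpC, hcm⟩ := hwhull
  set ψ : ι → StrongDual ℝ Z := fun i => StrongDual.toWeakDual.symm (p i) with hψdef
  have hψC : ∀ i ∈ t, ψ i ∈ C := by
    intro i hi
    obtain ⟨φ, hφC, hφ⟩ := hpC i hi
    have : ψ i = φ := by
      show StrongDual.toWeakDual.symm (p i) = φ
      rw [← hφ]
      exact StrongDual.toWeakDual.symm_apply_apply φ
    rw [this]; exact hφC
  have hpψ : ∀ i, p i = StrongDual.toWeakDual (ψ i) := by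
    intro i; simp [hψdef]
  -- w = toWeakDual g
  have hw : w = StrongDual.toWeakDual (∑ i ∈ t, a i • ψ i) := by
    rw [← hcm, Finset.centerMass_eq_of_sum_1 _ _ ha1, map_sum]
    refine Finset.sum_congr rfl fun i hi => ?_
    rw [hpψ i, map_smul]
  have hsum_apply : ∀ v : Z, (∑ i ∈ t, a i • ψ i) v = ∑ i ∈ t, a i * ψ i v := by
    intro v
    rw [ContinuousLinearMap.sum_apply]
    exact Finset.sum_congr rfl fun i _ => rfl
  have hwu : 1 - δ' < ∑ i ∈ t, a i * ψ i u := by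
    have h := hwV.1
    rw [hw] at h
    rw [← hsum_apply u]
    exact h
  have hwz : z₀ z - δ' < ∑ i ∈ t, a i * ψ i z := by
    have h := hwV.2
    rw [hw] at h
    rw [← hsum_apply z]
    exact h
  -- norm bounds
  have hnorm : ∀ i ∈ t, ‖ψ i‖ ≤ 1 := by
    intro i hi
    have := hC (hψC i hi)
    simpa using this
  have hψu1 : ∀ i ∈ t, ψ i u ≤ 1 := by
    intro i hi
    calc ψ i u ≤ ‖ψ i u‖ := le_abs_self _
      _ ≤ ‖ψ i‖ * ‖u‖ := (ψ i).le_opNorm u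
      _ ≤ 1 := by rw [hu]; simpa using hnorm i hi
  have hψz : ∀ i ∈ t, ψ i z ≤ ‖z‖ := by
    intro i hi
    calc ψ i z ≤ ‖ψ i z‖ := le_abs_self _
      _ ≤ ‖ψ i‖ * ‖z‖ := (ψ i).le_opNorm z
      _ ≤ 1 * ‖z‖ := by
          exact mul_le_mul_of_nonneg_right (hnorm i hi) (norm_nonneg z)
      _ = ‖z‖ := one_mul _
  have hz₀z : |z₀ z| ≤ ‖z‖ := by
    calc |z₀ z| = ‖z₀ z‖ := rfl
      _ ≤ ‖z₀‖ * ‖z‖ := z₀.le_opNorm z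
      _ = ‖z‖ := by rw [hz₀, one_mul]
  -- the splitting
  set P : ι → Prop := fun i => ψ i u ≤ 1 - δ with hPdef
  have hPdec : DecidablePred P := Classical.decPred P
  set A : Finset ι := t.filter P with hAdef
  set B : Finset ι := t.filter (fun i => ¬ P i) with hBdef
  set tA : ℝ := ∑ i ∈ A, a i with htAdef
  clear_value M δ' tA
  have hsplit : ∀ f : ι → ℝ, ∑ i ∈ A, f i + ∑ i ∈ B, f i = ∑ i ∈ t, f i := by
    intro f
    exact Finset.sum_filter_add_sum_filter_not t P f
  have htA0 : 0 ≤ tA := by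
    rw [htAdef]
    exact Finset.sum_nonneg fun i hi => ha0 i (Finset.mem_filter.mp hi).1
  have htB : ∑ i ∈ B, a i = 1 - tA := by
    have := hsplit a
    rw [ha1] at this
    linarith
  -- Step 1 : sum ψ u bound
  have hstep1 : ∑ i ∈ t, a i * ψ i u ≤ 1 - δ * tA := by
    rw [← hsplit (fun i => a i * ψ i u)]
    have h1 : ∑ i ∈ A, a i * ψ i u ≤ ∑ i ∈ A, a i * (1 - δ) := by
      refine Finset.sum_le_sum fun i hi => ?_
      obtain ⟨hit, hiP⟩ := Finset.mem_filter.mp hi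
      exact mul_le_mul_of_nonneg_left hiP (ha0 i hit)
    have h2 : ∑ i ∈ B, a i * ψ i u ≤ ∑ i ∈ B, a i := by
      refine Finset.sum_le_sum fun i hi => ?_
      obtain ⟨hit, _⟩ := Finset.mem_filter.mp hi
      calc a i * ψ i u ≤ a i * 1 :=
            mul_le_mul_of_nonneg_left (hψu1 i hit) (ha0 i hit)
        _ = a i := mul_one _
    have h3 : ∑ i ∈ A, a i * (1 - δ) = tA * (1 - δ) := by
      rw [htAdef, Finset.sum_mul]
    have h4 : tA * (1 - δ) = tA - δ * tA := by ring
    linarith [h1, h2, h3, htB, h4]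
  have htAsmall : tA * δ < δ' := by
    have hc : δ * tA = tA * δ := mul_comm _ _
    linarith [hwu, hstep1, hc]
  -- Step 2 : sum ψ z bound
  have hstep2 : ∑ i ∈ t, a i * ψ i z ≤ tA * ‖z‖ + (1 - tA) * (z₀ z - δ) := by
    rw [← hsplit (fun i => a i * ψ i z)]
    have h1 : ∑ i ∈ A, a i * ψ i z ≤ ∑ i ∈ A, a i * ‖z‖ := by
      refine Finset.sum_le_sum fun i hi => ?_
      obtain ⟨hit, _⟩ := Finset.mem_filter.mp hi
      exact mul_le_mul_of_nonneg_left (hψz i hit) (ha0 i hit)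
    have h2 : ∑ i ∈ B, a i * ψ i z ≤ ∑ i ∈ B, a i * (z₀ z - δ) := by
      refine Finset.sum_le_sum fun i hi => ?_
      obtain ⟨hit, hiP⟩ := Finset.mem_filter.mp hi
      rw [hPdef] at hiP
      have := hcon (ψ i) (hψC i hit) (lt_of_not_ge hiP)
      exact mul_le_mul_of_nonneg_left this (ha0 i hit)
    have h3 : ∑ i ∈ A, a i * ‖z‖ = tA * ‖z‖ := by
      rw [htAdef, Finset.sum_mul]
    have h4 : ∑ i ∈ B, a i * (z₀ z - δ) = (1 - tA) * (z₀ z - δ) := by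
      rw [← htB, Finset.sum_mul]
    linarith [h1, h2]
  -- final contradiction
  have habs : |z₀ z| ≤ ‖z‖ := hz₀z
  have h5 : z₀ z - δ' < tA * ‖z‖ + (1 - tA) * (z₀ z - δ) := lt_of_lt_of_le hwz hstep2
  have h6 : tA * ‖z‖ + (1 - tA) * (z₀ z - δ) = z₀ z - δ + tA * (‖z‖ - z₀ z + δ) := by ring
  have h7 : ‖z‖ - z₀ z + δ ≤ M := by
    have := abs_le.mp habs
    rw [hMdef]; linarith [this.1]
  have h8 : tA * (‖z‖ - z₀ z + δ) ≤ tA * M := mul_le_mul_of_nonneg_left h7 htA0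
  have h9 : tA * δ * M ≤ δ' * M := mul_le_mul_of_nonneg_right htAsmall.le hM.le
  have h10 : δ - δ' < tA * M := by linarith [h5, h6, h8]
  have h11 : (δ - δ') * δ < tA * M * δ :=
    mul_lt_mul_of_pos_right h10 hδ
  have h12 : tA * M * δ = tA * δ * M := by ring
  have h13 : (δ - δ') * δ = δ ^ 2 - δ' * δ := by ring
  have hkey2 : δ' * δ + δ' * M = δ ^ 2 / 2 := by rw [← hkey]; ring
  have hδ2 : 0 < δ ^ 2 := by positivity
  linarith [h9, h11, h12, h13, hkey2, hδ2]
end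

section
/- Let X₁, X₂, Y₁, Y₂ be Banach spaces, G₁ ∈ L(X₁,Y₁) and G₂ ∈ L(X₂,Y₂) norm-one operators, and let G : X₁ ⊕_∞ X₂ → Y₁ ⊕_∞ Y₂ be the diagonal operator G(x₁,x₂) = (G₁x₁, G₂x₂). Then n_G(X₁ ⊕_∞ X₂, Y₁ ⊕_∞ Y₂) = min { n_{G₁}(X₁,Y₁), n_{G₂}(X₂,Y₂) }. -/
open NormedSpace

open NormedSpace Set

namespace NumIdx

variable {Z : Type*} [NormedAddCommGroup Z] [NormedSpace ℝ Z]

/-- difference quotient -/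
noncomputable def dq (u z : Z) (t : ℝ) : ℝ := (‖u + t • z‖ - 1) / t

noncomputable def tau (u z : Z) : ℝ := sInf (dq u z '' Ioi 0)

lemma dq_mem {u z : Z} {t : ℝ} (ht : 0 < t) : dq u z t ∈ dq u z '' Ioi 0 :=
  ⟨t, ht, rfl⟩

lemma dq_nonempty (u z : Z) : (dq u z '' Ioi 0).Nonempty := ⟨_, dq_mem one_pos⟩

lemma dq_lb {u z : Z} (hu : ‖u‖ = 1) {t : ℝ} (ht : 0 < t) : -‖z‖ ≤ dq u z t := by
  rw [dq, le_div_iff₀ ht]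
  have h1 : (1 : ℝ) - t * ‖z‖ ≤ ‖u + t • z‖ := by
    have := norm_add_le (u + t • z) (-(t • z))
    simp only [add_neg_cancel_right, norm_neg, norm_smul, Real.norm_eq_abs,
      abs_of_pos ht] at this
    rw [hu] at this
    linarith
  nlinarith

lemma dq_bddBelow {u z : Z} (hu : ‖u‖ = 1) : BddBelow (dq u z '' Ioi 0) := by
  refine ⟨-‖z‖, ?_⟩
  rintro r ⟨t, ht, rfl⟩
  exact dq_lb hu ht

lemma tau_le_dq {u z : Z} (hu : ‖u‖ = 1) {t : ℝ} (ht : 0 < t) : tau u z ≤ dq u z t :=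
  csInf_le (dq_bddBelow hu) (dq_mem ht)

lemma le_tau {u z : Z} {c : ℝ} (h : ∀ t, 0 < t → c ≤ dq u z t) : c ≤ tau u z := by
  apply le_csInf (dq_nonempty u z)
  rintro r ⟨t, ht, rfl⟩
  exact h t ht

lemma dq_mono {u z : Z} (hu : ‖u‖ = 1) {s t : ℝ} (hs : 0 < s) (hst : s ≤ t) :
    dq u z s ≤ dq u z t := by
  have ht : 0 < t := hs.trans_le hst
  have key : ‖u + s • z‖ ≤ (1 - s / t) * ‖u‖ + (s / t) * ‖u + t • z‖ := by
    have heq : u + s • z = (1 - s / t) • u + (s / t) • (u + t • z) := by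
      rw [smul_add, smul_smul]
      rw [div_mul_cancel₀ _ ht.ne']
      module
    rw [heq]
    calc ‖(1 - s / t) • u + (s / t) • (u + t • z)‖
        ≤ ‖(1 - s / t) • u‖ + ‖(s / t) • (u + t • z)‖ := norm_add_le _ _
      _ = (1 - s / t) * ‖u‖ + (s / t) * ‖u + t • z‖ := by
          rw [norm_smul, norm_smul, Real.norm_eq_abs, Real.norm_eq_abs,
            abs_of_nonneg (by positivity : (0:ℝ) ≤ s / t),
            abs_of_nonneg (by rw [sub_nonneg]; exact div_le_one_of_le₀ hst ht.le)]
  rw [hu] at key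
  rw [dq, dq, div_le_div_iff₀ hs ht]
  have : ‖u + s • z‖ - 1 ≤ (s / t) * (‖u + t • z‖ - 1) := by
    have h2 : (s / t) * (‖u + t • z‖ - 1) = (1 - s/t) * 1 + (s/t) * ‖u + t • z‖ - 1 := by ring
    rw [h2]; linarith
  calc (‖u + s • z‖ - 1) * t ≤ ((s / t) * (‖u + t • z‖ - 1)) * t := by
        apply mul_le_mul_of_nonneg_right this ht.le
    _ = (‖u + t • z‖ - 1) * s := by field_simp
lemma tau_le_norm {u z : Z} (hu : ‖u‖ = 1) : tau u z ≤ ‖z‖ := by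
  refine (tau_le_dq hu one_pos).trans ?_
  rw [dq, one_smul, div_one, sub_le_iff_le_add]
  calc ‖u + z‖ ≤ ‖u‖ + ‖z‖ := norm_add_le _ _
    _ = ‖z‖ + 1 := by rw [hu]; ring

lemma tau_zero (u : Z) (hu : ‖u‖ = 1) : tau u (0 : Z) = 0 := by
  have h : ∀ t, 0 < t → dq u (0:Z) t = 0 := by
    intro t ht
    simp [dq, hu]
  apply le_antisymm
  · rw [← h 1 one_pos]; exact tau_le_dq hu one_pos
  · exact le_tau fun t ht => (h t ht).ge

end NumIdx

namespace NumIdx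
variable {Z : Type*} [NormedAddCommGroup Z] [NormedSpace ℝ Z]

lemma smul_le_tau_smul {u z : Z} (hu : ‖u‖ = 1) {c : ℝ} (hc : 0 < c) :
    c * tau u z ≤ tau u (c • z) := by
  apply le_tau
  intro t ht
  have : dq u (c • z) t = c * dq u z (t * c) := by
    rw [dq, dq, smul_smul]
    field_simp
  rw [this]
  exact mul_le_mul_of_nonneg_left (tau_le_dq hu (mul_pos ht hc)) hc.le

lemma tau_smul {u z : Z} (hu : ‖u‖ = 1) {c : ℝ} (hc : 0 < c) :
    tau u (c • z) = c * tau u z := by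
  refine le_antisymm ?_ (smul_le_tau_smul hu hc)
  have h := smul_le_tau_smul hu (z := c • z) (inv_pos.mpr hc)
  rw [smul_smul, inv_mul_cancel₀ hc.ne', one_smul] at h
  calc tau u (c • z) = c * (c⁻¹ * tau u (c • z)) := by field_simp
    _ ≤ c * tau u z := mul_le_mul_of_nonneg_left h hc.le

lemma tau_add_le {u z w : Z} (hu : ‖u‖ = 1) : tau u (z + w) ≤ tau u z + tau u w := by
  have key : ∀ t, 0 < t → dq u (z + w) t ≤ dq u z (2 * t) + dq u w (2 * t) := by
    intro t ht
    have heq : u + t • (z + w) = (1/2 : ℝ) • (u + (2*t) • z) + (1/2 : ℝ) • (u + (2*t) • w) := by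
      module
    have hn : ‖u + t • (z + w)‖ ≤ (1/2) * ‖u + (2*t) • z‖ + (1/2) * ‖u + (2*t) • w‖ := by
      rw [heq]
      refine (norm_add_le _ _).trans ?_
      rw [norm_smul, norm_smul]
      simp [Real.norm_eq_abs]
    rw [dq, dq, dq]
    rw [← add_div, div_le_div_iff₀ ht (by linarith : (0:ℝ) < 2 * t)]
    nlinarith
  by_contra hlt
  push_neg at hlt
  set ε := tau u (z + w) - (tau u z + tau u w) with hε
  have hεpos : 0 < ε := by simp [hε]; linarith
  obtain ⟨r1, ⟨t1, ht1, rfl⟩, h1⟩ := exists_lt_of_csInf_lt (dq_nonempty u z)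
    (show sInf (dq u z '' Ioi 0) < tau u z + ε/2 by rw [← tau]; linarith)
  obtain ⟨r2, ⟨t2, ht2, rfl⟩, h2⟩ := exists_lt_of_csInf_lt (dq_nonempty u w)
    (show sInf (dq u w '' Ioi 0) < tau u w + ε/2 by rw [← tau]; linarith)
  set t := min t1 t2 / 2 with htdef
  have ht : 0 < t := half_pos (lt_min ht1 ht2)
  have hb : tau u (z + w) ≤ dq u z (2*t) + dq u w (2*t) :=
    (tau_le_dq hu ht).trans (key t ht)
  have m1 : dq u z (2*t) ≤ dq u z t1 := dq_mono hu (by positivity) (by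
    rw [htdef]; rw [mul_div_cancel₀ _ (two_ne_zero)]; exact min_le_left _ _)
  have m2 : dq u w (2*t) ≤ dq u w t2 := dq_mono hu (by positivity) (by
    rw [htdef]; rw [mul_div_cancel₀ _ (two_ne_zero)]; exact min_le_right _ _)
  have : tau u (z + w) < tau u z + tau u w + ε := by
    calc tau u (z+w) ≤ dq u z (2*t) + dq u w (2*t) := hb
      _ ≤ dq u z t1 + dq u w t2 := add_le_add m1 m2
      _ < (tau u z + ε/2) + (tau u w + ε/2) := add_lt_add h1 h2
      _ = tau u z + tau u w + ε := by ring
  rw [hε] at this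
  linarith

lemma tau_self {u : Z} (hu : ‖u‖ = 1) : tau u u = 1 := by
  have h : ∀ t, 0 < t → dq u u t = 1 := by
    intro t ht
    have : u + t • u = (1 + t) • u := by module
    rw [dq, this, norm_smul, Real.norm_eq_abs, abs_of_pos (by linarith), hu]
    field_simp
    ring
  apply le_antisymm
  · rw [← h 1 one_pos]; exact tau_le_dq hu one_pos
  · exact le_tau fun t ht => (h t ht).ge

lemma tau_neg_self {u : Z} (hu : ‖u‖ = 1) : tau u (-u) = -1 := by
  apply le_antisymm
  · have : dq u (-u) 1 = -1 := by
      simp [dq]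
    rw [← this]; exact tau_le_dq hu one_pos
  · apply le_tau
    intro t ht
    have : u + t • (-u) = (1 - t) • u := by module
    rw [dq, this, norm_smul, Real.norm_eq_abs, hu, mul_one, le_div_iff₀ ht]
    have := abs_nonneg (1 - t)
    have h2 : 1 - t ≤ |1 - t| := le_abs_self _
    nlinarith

lemma tau_smul_self {u : Z} (hu : ‖u‖ = 1) (a : ℝ) : tau u (a • u) = a := by
  rcases lt_trichotomy a 0 with h | h | h
  · have : a • u = (-a) • (-u) := by module
    rw [this, tau_smul hu (by linarith), tau_neg_self hu]; ring
  · rw [h, zero_smul, tau_zero u hu]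
  · rw [tau_smul hu h, tau_self hu, mul_one]

lemma neg_tau_neg_le {u z : Z} (hu : ‖u‖ = 1) : -tau u (-z) ≤ tau u z := by
  have h := tau_add_le (z := z) (w := -z) hu
  rw [add_neg_cancel, tau_zero u hu] at h
  linarith

end NumIdx

namespace NumIdx
variable {Z : Type*} [NormedAddCommGroup Z] [NormedSpace ℝ Z]

lemma key12 {u z : Z} (hu : ‖u‖ = 1) (a : ℝ) {b : ℝ} (hb : 0 ≤ b) :
    a + b * tau u z ≤ tau u (a • u + b • z) := by
  have h1 : tau u (b • z) = b * tau u z := by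
    rcases hb.lt_or_eq with h | h
    · exact tau_smul hu h
    · rw [← h, zero_smul, tau_zero u hu, zero_mul]
  have h2 : tau u ((a • u + b • z) + (-a) • u) ≤ tau u (a • u + b • z) + tau u ((-a) • u) :=
    tau_add_le hu
  have h3 : (a • u + b • z) + (-a) • u = b • z := by module
  rw [h3, h1, tau_smul_self hu] at h2
  linarith

/-- The sublinear functional used for the one-step Hahn-Banach extension. -/
noncomputable def qfun (u z : Z) (w : Z) : ℝ :=
  sInf ((fun b => tau u (w + b • z) - b * tau u z) '' Ici 0)

lemma qfun_nonempty (u z w : Z) :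
    ((fun b => tau u (w + b • z) - b * tau u z) '' Ici (0:ℝ)).Nonempty :=
  ⟨_, 0, self_mem_Ici, rfl⟩

lemma qfun_elt_lb {u z w : Z} (hu : ‖u‖ = 1) {b : ℝ} (hb : 0 ≤ b) :
    -tau u (-w) ≤ tau u (w + b • z) - b * tau u z := by
  have h1 : tau u (b • z) = b * tau u z := by
    rcases hb.lt_or_eq with h | h
    · exact tau_smul hu h
    · rw [← h, zero_smul, tau_zero u hu, zero_mul]
  have h2 : tau u ((w + b • z) + (-w)) ≤ tau u (w + b • z) + tau u (-w) := tau_add_le hu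
  have h3 : (w + b • z) + (-w) = b • z := by module
  rw [h3, h1] at h2
  linarith

lemma qfun_bddBelow {u z : Z} (hu : ‖u‖ = 1) (w : Z) :
    BddBelow ((fun b => tau u (w + b • z) - b * tau u z) '' Ici (0:ℝ)) := by
  refine ⟨-tau u (-w), ?_⟩
  rintro r ⟨b, hb, rfl⟩
  exact qfun_elt_lb hu hb

lemma qfun_le {u z : Z} (hu : ‖u‖ = 1) (w : Z) {b : ℝ} (hb : 0 ≤ b) :
    qfun u z w ≤ tau u (w + b • z) - b * tau u z :=
  csInf_le (qfun_bddBelow hu w) ⟨b, hb, rfl⟩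

lemma le_qfun {u z : Z} {w : Z} {c : ℝ}
    (h : ∀ b : ℝ, 0 ≤ b → c ≤ tau u (w + b • z) - b * tau u z) : c ≤ qfun u z w := by
  apply le_csInf (qfun_nonempty u z w)
  rintro r ⟨b, hb, rfl⟩
  exact h b hb

lemma qfun_le_tau {u z : Z} (hu : ‖u‖ = 1) (w : Z) : qfun u z w ≤ tau u w := by
  have := qfun_le hu (z := z) w (le_refl (0:ℝ))
  simpa using this

lemma qfun_neg_z {u z : Z} (hu : ‖u‖ = 1) : qfun u z (-z) ≤ -tau u z := by
  have h := qfun_le hu (z := z) (-z) (zero_le_one)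
  have h0 : -z + (1:ℝ) • z = 0 := by module
  rw [h0, tau_zero u hu, one_mul] at h
  linarith

lemma smul_qfun_le {u z : Z} (hu : ‖u‖ = 1) {c : ℝ} (hc : 0 < c) (w : Z) :
    c * qfun u z w ≤ qfun u z (c • w) := by
  apply le_qfun
  intro b hb
  have heq : c • w + b • z = c • (w + (b / c) • z) := by
    rw [smul_add, smul_smul, mul_div_cancel₀ _ hc.ne']
  rw [heq, tau_smul hu hc]
  have h := qfun_le hu (z := z) w (div_nonneg hb hc.le)
  have := mul_le_mul_of_nonneg_left h hc.le
  calc c * qfun u z w ≤ c * (tau u (w + (b/c) • z) - (b/c) * tau u z) := this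
    _ = c * tau u (w + (b/c) • z) - b * tau u z := by field_simp

lemma qfun_smul {u z : Z} (hu : ‖u‖ = 1) {c : ℝ} (hc : 0 < c) (w : Z) :
    qfun u z (c • w) = c * qfun u z w := by
  refine le_antisymm ?_ (smul_qfun_le hu hc w)
  have h := smul_qfun_le hu (z := z) (inv_pos.mpr hc) (c • w)
  rw [smul_smul, inv_mul_cancel₀ hc.ne', one_smul] at h
  calc qfun u z (c • w) = c * (c⁻¹ * qfun u z (c • w)) := by field_simp
    _ ≤ c * qfun u z w := mul_le_mul_of_nonneg_left h hc.le

lemma qfun_add {u z : Z} (hu : ‖u‖ = 1) (w₁ w₂ : Z) :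
    qfun u z (w₁ + w₂) ≤ qfun u z w₁ + qfun u z w₂ := by
  by_contra hlt
  push_neg at hlt
  set ε := qfun u z (w₁ + w₂) - (qfun u z w₁ + qfun u z w₂) with hε
  have hεpos : 0 < ε := by rw [hε]; linarith
  obtain ⟨r1, ⟨b1, hb1, rfl⟩, h1⟩ := exists_lt_of_csInf_lt (qfun_nonempty u z w₁)
    (show sInf _ < qfun u z w₁ + ε/2 by rw [← qfun]; linarith)
  obtain ⟨r2, ⟨b2, hb2, rfl⟩, h2⟩ := exists_lt_of_csInf_lt (qfun_nonempty u z w₂)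
    (show sInf _ < qfun u z w₂ + ε/2 by rw [← qfun]; linarith)
  simp only [mem_Ici] at hb1 hb2
  dsimp only at h1 h2
  have key : qfun u z (w₁ + w₂) ≤
      (tau u (w₁ + b1 • z) - b1 * tau u z) + (tau u (w₂ + b2 • z) - b2 * tau u z) := by
    have h3 : qfun u z (w₁ + w₂) ≤ tau u ((w₁ + w₂) + (b1 + b2) • z) - (b1 + b2) * tau u z :=
      qfun_le hu _ (by linarith)
    have h4 : tau u ((w₁ + w₂) + (b1 + b2) • z) ≤ tau u (w₁ + b1 • z) + tau u (w₂ + b2 • z) := by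
      have heq : (w₁ + w₂) + (b1 + b2) • z = (w₁ + b1 • z) + (w₂ + b2 • z) := by module
      rw [heq]; exact tau_add_le hu
    linarith
  linarith

lemma qfun_le_norm {u z : Z} (hu : ‖u‖ = 1) (w : Z) : qfun u z w ≤ ‖w‖ :=
  (qfun_le_tau hu w).trans (tau_le_norm hu)

/-- Hahn–Banach: norming functional that dominates `tau u z`. -/
lemma exists_norming_functional {u : Z} (hu : ‖u‖ = 1) (z : Z) :
    ∃ φ : StrongDual ℝ Z, ‖φ‖ = 1 ∧ φ u = 1 ∧ tau u z ≤ φ z := by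
  have hu0 : u ≠ 0 := by intro h; rw [h, norm_zero] at hu; norm_num at hu
  set f : Z →ₗ.[ℝ] ℝ := LinearPMap.mkSpanSingleton u 1 hu0 with hf
  have hdom : ∀ x : f.domain, f x ≤ qfun u z x := by
    rintro ⟨x, hx⟩
    obtain ⟨c, rfl⟩ := Submodule.mem_span_singleton.mp hx
    have happ : (LinearPMap.mkSpanSingleton u (1:ℝ) hu0) ⟨c • u, hx⟩ = c • (1:ℝ) :=
      LinearPMap.mkSpanSingleton'_apply u 1 _ c hx
    rw [happ]
    have := key12 (z := z) hu c (le_refl 0)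
    simp only [zero_smul, add_zero, zero_mul] at this
    have h2 : c ≤ qfun u z (c • u) := by
      apply le_qfun
      intro b hb
      have := key12 (z := z) hu c hb
      linarith
    simpa using h2
  obtain ⟨g, hg_eq, hg_le⟩ := exists_extension_of_le_sublinear f (qfun u z)
    (fun c hc x => qfun_smul hu hc x) (qfun_add hu) hdom
  have hbound : ∀ x, |g x| ≤ ‖x‖ := by
    intro x
    rw [abs_le]
    constructor
    · have := (hg_le (-x)).trans (qfun_le_norm hu (-x))
      rw [map_neg, norm_neg] at this
      linarith
    · exact (hg_le x).trans (qfun_le_norm hu x)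
  set φ : Z →L[ℝ] ℝ := g.mkContinuous 1 (fun x => by simpa using hbound x) with hφ
  have happly : ∀ x, φ x = g x := fun x => rfl
  have hφu : φ u = 1 := by
    rw [happly]
    exact (hg_eq ⟨u, Submodule.mem_span_singleton_self u⟩).trans
      (LinearPMap.mkSpanSingleton_apply ℝ ℝ hu0 1)
  have hφnorm : ‖φ‖ = 1 := by
    apply le_antisymm
    · exact (g.mkContinuous_norm_le zero_le_one (fun x => by simpa using hbound x))
    · have := φ.le_opNorm u
      rw [hφu, hu, mul_one] at this
      simpa using this
  refine ⟨φ, hφnorm, hφu, ?_⟩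
  have h1 : g (-z) ≤ qfun u z (-z) := hg_le (-z)
  have h2 := qfun_neg_z (z := z) hu
  rw [map_neg] at h1
  rw [happly]
  linarith

end NumIdx

namespace NumIdx
open NormedSpace
variable {Z : Type*} [NormedAddCommGroup Z] [NormedSpace ℝ Z]

lemma vSet_nonempty {u : Z} (hu : ‖u‖ = 1) (z : Z) :
    {r : ℝ | ∃ φ : StrongDual ℝ Z, ‖φ‖ = 1 ∧ φ u = 1 ∧ |φ z| = r}.Nonempty := by
  obtain ⟨φ, h1, h2, _⟩ := exists_norming_functional hu z
  exact ⟨|φ z|, φ, h1, h2, rfl⟩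

lemma vSet_bddAbove (u z : Z) :
    BddAbove {r : ℝ | ∃ φ : StrongDual ℝ Z, ‖φ‖ = 1 ∧ φ u = 1 ∧ |φ z| = r} := by
  refine ⟨‖z‖, ?_⟩
  rintro r ⟨φ, h1, h2, rfl⟩
  calc |φ z| ≤ ‖φ‖ * ‖z‖ := φ.le_opNorm z
    _ = ‖z‖ := by rw [h1, one_mul]

lemma apply_le_tau {u z : Z} (hu : ‖u‖ = 1) {φ : StrongDual ℝ Z} (h1 : ‖φ‖ = 1) (h2 : φ u = 1) :
    φ z ≤ tau u z := by
  apply le_tau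
  intro t ht
  have h3 : 1 + t * φ z ≤ ‖u + t • z‖ := by
    have h4 := φ.le_opNorm (u + t • z)
    rw [h1, one_mul] at h4
    calc 1 + t * φ z = φ (u + t • z) := by
          rw [map_add, map_smul, h2, smul_eq_mul]
      _ ≤ |φ (u + t • z)| := le_abs_self _
      _ = ‖φ (u + t • z)‖ := (Real.norm_eq_abs _).symm
      _ ≤ ‖u + t • z‖ := h4
  rw [dq, le_div_iff₀ ht]
  linarith

lemma vRad_eq_max_tau {u : Z} (hu : ‖u‖ = 1) (z : Z) :
    vRad u z = max (tau u z) (tau u (-z)) := by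
  apply le_antisymm
  · apply csSup_le (vSet_nonempty hu z)
    rintro r ⟨φ, h1, h2, rfl⟩
    rcases abs_cases (φ z) with ⟨heq, _⟩ | ⟨heq, _⟩
    · rw [heq]
      exact le_max_of_le_left (apply_le_tau hu h1 h2)
    · rw [heq]
      have : φ (-z) ≤ tau u (-z) := apply_le_tau hu h1 h2
      rw [map_neg] at this
      exact le_max_of_le_right this
  · rw [max_le_iff]
    constructor
    · obtain ⟨φ, h1, h2, h3⟩ := exists_norming_functional hu z
      calc tau u z ≤ φ z := h3
        _ ≤ |φ z| := le_abs_self _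
        _ ≤ vRad u z := le_csSup (vSet_bddAbove u z) ⟨φ, h1, h2, rfl⟩
    · obtain ⟨φ, h1, h2, h3⟩ := exists_norming_functional hu (-z)
      calc tau u (-z) ≤ φ (-z) := h3
        _ ≤ |φ z| := by rw [map_neg]; exact neg_le_abs _
        _ ≤ vRad u z := le_csSup (vSet_bddAbove u z) ⟨φ, h1, h2, rfl⟩

lemma vRad_nonneg {u : Z} (hu : ‖u‖ = 1) (z : Z) : 0 ≤ vRad u z := by
  obtain ⟨φ, h1, h2, _⟩ := exists_norming_functional hu z
  exact (abs_nonneg (φ z)).trans (le_csSup (vSet_bddAbove u z) ⟨φ, h1, h2, rfl⟩)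

lemma vRad_le_norm {u : Z} (hu : ‖u‖ = 1) (z : Z) : vRad u z ≤ ‖z‖ := by
  apply csSup_le (vSet_nonempty hu z)
  rintro r ⟨φ, h1, h2, rfl⟩
  calc |φ z| ≤ ‖φ‖ * ‖z‖ := φ.le_opNorm z
    _ = ‖z‖ := by rw [h1, one_mul]

end NumIdx

namespace NumIdx
open ContinuousLinearMap

variable {X₁ X₂ Y₁ Y₂ : Type*} [NormedAddCommGroup X₁] [NormedSpace ℝ X₁]
  [NormedAddCommGroup X₂] [NormedSpace ℝ X₂]
  [NormedAddCommGroup Y₁] [NormedSpace ℝ Y₁]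
  [NormedAddCommGroup Y₂] [NormedSpace ℝ Y₂]

lemma prodMap_apply' (f : X₁ →L[ℝ] Y₁) (g : X₂ →L[ℝ] Y₂) (x : X₁ × X₂) :
    (f.prodMap g) x = (f x.1, g x.2) := rfl

lemma norm_prodMap_le (f : X₁ →L[ℝ] Y₁) (g : X₂ →L[ℝ] Y₂) :
    ‖f.prodMap g‖ ≤ max ‖f‖ ‖g‖ := by
  apply opNorm_le_bound _ (le_max_of_le_left (norm_nonneg f))
  intro x
  rw [prodMap_apply', Prod.norm_def]
  apply max_le
  · calc ‖f x.1‖ ≤ ‖f‖ * ‖x.1‖ := f.le_opNorm _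
      _ ≤ max ‖f‖ ‖g‖ * ‖x‖ := by
          apply mul_le_mul (le_max_left _ _) _ (norm_nonneg _) (le_max_of_le_left (norm_nonneg f))
          exact le_trans (le_max_left _ _) (le_of_eq (Prod.norm_def x).symm)
  · calc ‖g x.2‖ ≤ ‖g‖ * ‖x.2‖ := g.le_opNorm _
      _ ≤ max ‖f‖ ‖g‖ * ‖x‖ := by
          apply mul_le_mul (le_max_right _ _) _ (norm_nonneg _) (le_max_of_le_left (norm_nonneg f))
          exact le_trans (le_max_right _ _) (le_of_eq (Prod.norm_def x).symm)

lemma norm_le_prodMap_left (f : X₁ →L[ℝ] Y₁) (g : X₂ →L[ℝ] Y₂) :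
    ‖f‖ ≤ ‖f.prodMap g‖ := by
  apply opNorm_le_bound _ (norm_nonneg _)
  intro x
  calc ‖f x‖ ≤ ‖(f.prodMap g) (x, 0)‖ := by
        rw [prodMap_apply', Prod.norm_def]; exact le_max_left _ _
    _ ≤ ‖f.prodMap g‖ * ‖((x, 0) : X₁ × X₂)‖ := (f.prodMap g).le_opNorm _
    _ = ‖f.prodMap g‖ * ‖x‖ := by
        rw [Prod.norm_def]
        simp [max_eq_left (norm_nonneg x)]

lemma norm_le_prodMap_right (f : X₁ →L[ℝ] Y₁) (g : X₂ →L[ℝ] Y₂) :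
    ‖g‖ ≤ ‖f.prodMap g‖ := by
  apply opNorm_le_bound _ (norm_nonneg _)
  intro x
  calc ‖g x‖ ≤ ‖(f.prodMap g) (0, x)‖ := by
        rw [prodMap_apply', Prod.norm_def]; exact le_max_right _ _
    _ ≤ ‖f.prodMap g‖ * ‖((0, x) : X₁ × X₂)‖ := (f.prodMap g).le_opNorm _
    _ = ‖f.prodMap g‖ * ‖x‖ := by
        rw [Prod.norm_def]
        simp [max_eq_right (norm_nonneg x)]

lemma norm_prodMap (f : X₁ →L[ℝ] Y₁) (g : X₂ →L[ℝ] Y₂) :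
    ‖f.prodMap g‖ = max ‖f‖ ‖g‖ :=
  le_antisymm (norm_prodMap_le f g)
    (max_le (norm_le_prodMap_left f g) (norm_le_prodMap_right f g))

end NumIdx

namespace NumIdx
open Set

lemma sInf_image_max_zero (a : ℝ → ℝ) (hbd : BddBelow (a '' Ioi 0)) :
    sInf ((fun t => max (a t) 0) '' Ioi 0) = max (sInf (a '' Ioi 0)) 0 := by
  have hne : (a '' Ioi 0).Nonempty := ⟨a 1, 1, mem_Ioi.mpr one_pos, rfl⟩
  have hbd0 : BddBelow ((fun t => max (a t) 0) '' Ioi 0) := by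
    refine ⟨0, ?_⟩
    rintro r ⟨t, ht, rfl⟩
    exact le_max_right _ _
  apply le_antisymm
  · rcases le_or_gt 0 (sInf (a '' Ioi 0)) with h | h
    · rw [max_eq_left h]
      have key : ∀ ε > 0, sInf ((fun t => max (a t) 0) '' Ioi 0) ≤ sInf (a '' Ioi 0) + ε := by
        intro ε hε
        obtain ⟨r, ⟨t, ht, rfl⟩, hr⟩ := exists_lt_of_csInf_lt hne
          (lt_add_of_pos_right _ hε)
        have : max (a t) 0 < sInf (a '' Ioi 0) + ε :=
          max_lt hr (lt_of_le_of_lt h (lt_add_of_pos_right _ hε))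
        exact (csInf_le hbd0 ⟨t, ht, rfl⟩).trans this.le
      exact le_of_forall_pos_le_add key
    · rw [max_eq_right h.le]
      obtain ⟨r, ⟨t, ht, rfl⟩, hr⟩ := exists_lt_of_csInf_lt hne h
      have : max (a t) 0 = 0 := max_eq_right hr.le
      calc sInf _ ≤ max (a t) 0 := csInf_le hbd0 ⟨t, ht, rfl⟩
        _ = 0 := this
  · refine le_csInf ⟨max (a 1) 0, ⟨1, mem_Ioi.mpr one_pos, rfl⟩⟩ ?_
    rintro r ⟨t, ht, rfl⟩
    exact max_le_max (csInf_le hbd ⟨t, ht, rfl⟩) le_rfl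

end NumIdx

namespace NumIdx
open ContinuousLinearMap Set

variable {X₁ X₂ Y₁ Y₂ : Type*} [NormedAddCommGroup X₁] [NormedSpace ℝ X₁]
  [NormedAddCommGroup X₂] [NormedSpace ℝ X₂]
  [NormedAddCommGroup Y₁] [NormedSpace ℝ Y₁]
  [NormedAddCommGroup Y₂] [NormedSpace ℝ Y₂]

lemma norm_prodMap_one {G₁ : X₁ →L[ℝ] Y₁} {G₂ : X₂ →L[ℝ] Y₂} (hG₁ : ‖G₁‖ = 1)
    (hG₂ : ‖G₂‖ = 1) : ‖G₁.prodMap G₂‖ = 1 := by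
  rw [norm_prodMap, hG₁, hG₂, max_self]

lemma prodMap_add_smul (f f' : X₁ →L[ℝ] Y₁) (g g' : X₂ →L[ℝ] Y₂) (t : ℝ) :
    f.prodMap g + t • f'.prodMap g' = (f + t • f').prodMap (g + t • g') := by
  ext x <;> simp [prodMap_apply']

lemma neg_prodMap (f : X₁ →L[ℝ] Y₁) (g : X₂ →L[ℝ] Y₂) :
    -(f.prodMap g) = (-f).prodMap (-g) := by
  ext x <;> simp [prodMap_apply']

lemma dq_prodMap_left {G₁ : X₁ →L[ℝ] Y₁} {G₂ : X₂ →L[ℝ] Y₂} (hG₂ : ‖G₂‖ = 1)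
    (z₁ : X₁ →L[ℝ] Y₁) {t : ℝ} (ht : 0 < t) :
    dq (G₁.prodMap G₂) (z₁.prodMap (0 : X₂ →L[ℝ] Y₂)) t = max (dq G₁ z₁ t) 0 := by
  have h1 : G₁.prodMap G₂ + t • z₁.prodMap (0 : X₂ →L[ℝ] Y₂)
      = (G₁ + t • z₁).prodMap (G₂ + t • (0 : X₂ →L[ℝ] Y₂)) := prodMap_add_smul _ _ _ _ _
  rw [dq, h1, smul_zero, add_zero, norm_prodMap, hG₂]
  have h2 : max ‖G₁ + t • z₁‖ 1 - 1 = max (‖G₁ + t • z₁‖ - 1) 0 := by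
    rcases le_total ‖G₁ + t • z₁‖ 1 with h | h
    · rw [max_eq_right h, max_eq_right (by linarith)]; ring
    · rw [max_eq_left h, max_eq_left (by linarith)]
  rw [h2]
  have h3 : Monotone (fun r : ℝ => r / t) := fun a b hab => div_le_div_of_nonneg_right hab ht.le
  have := h3.map_max (a := ‖G₁ + t • z₁‖ - 1) (b := 0)
  simp only [zero_div] at this
  rw [this]
  rfl

lemma tau_prodMap_left {G₁ : X₁ →L[ℝ] Y₁} {G₂ : X₂ →L[ℝ] Y₂} (hG₁ : ‖G₁‖ = 1)
    (hG₂ : ‖G₂‖ = 1) (z₁ : X₁ →L[ℝ] Y₁) :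
    tau (G₁.prodMap G₂) (z₁.prodMap (0 : X₂ →L[ℝ] Y₂)) = max (tau G₁ z₁) 0 := by
  rw [tau]
  have himg : dq (G₁.prodMap G₂) (z₁.prodMap (0 : X₂ →L[ℝ] Y₂)) '' Ioi 0
      = (fun t => max (dq G₁ z₁ t) 0) '' Ioi 0 := by
    apply image_congr
    intro t ht
    exact dq_prodMap_left hG₂ z₁ (mem_Ioi.mp ht)
  rw [himg, sInf_image_max_zero _ (dq_bddBelow hG₁)]
  rfl

lemma vRad_prodMap_left {G₁ : X₁ →L[ℝ] Y₁} {G₂ : X₂ →L[ℝ] Y₂} (hG₁ : ‖G₁‖ = 1)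
    (hG₂ : ‖G₂‖ = 1) (z₁ : X₁ →L[ℝ] Y₁) :
    vRad (G₁.prodMap G₂) (z₁.prodMap (0 : X₂ →L[ℝ] Y₂)) = vRad G₁ z₁ := by
  have hu : ‖G₁.prodMap G₂‖ = 1 := norm_prodMap_one hG₁ hG₂
  rw [vRad_eq_max_tau hu]
  have hneg : -(z₁.prodMap (0 : X₂ →L[ℝ] Y₂)) = (-z₁).prodMap (0 : X₂ →L[ℝ] Y₂) := by
    rw [neg_prodMap, neg_zero]
  rw [hneg, tau_prodMap_left hG₁ hG₂, tau_prodMap_left hG₁ hG₂,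
    max_max_max_comm, max_self, ← vRad_eq_max_tau hG₁]
  exact max_eq_left (vRad_nonneg hG₁ z₁)

end NumIdx

namespace NumIdx
open ContinuousLinearMap Set

variable {X₁ X₂ Y₁ Y₂ : Type*} [NormedAddCommGroup X₁] [NormedSpace ℝ X₁]
  [NormedAddCommGroup X₂] [NormedSpace ℝ X₂]
  [NormedAddCommGroup Y₁] [NormedSpace ℝ Y₁]
  [NormedAddCommGroup Y₂] [NormedSpace ℝ Y₂]

lemma dq_prodMap_right {G₁ : X₁ →L[ℝ] Y₁} {G₂ : X₂ →L[ℝ] Y₂} (hG₁ : ‖G₁‖ = 1)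
    (z₂ : X₂ →L[ℝ] Y₂) {t : ℝ} (ht : 0 < t) :
    dq (G₁.prodMap G₂) ((0 : X₁ →L[ℝ] Y₁).prodMap z₂) t = max (dq G₂ z₂ t) 0 := by
  have h1 : G₁.prodMap G₂ + t • (0 : X₁ →L[ℝ] Y₁).prodMap z₂
      = (G₁ + t • (0 : X₁ →L[ℝ] Y₁)).prodMap (G₂ + t • z₂) := prodMap_add_smul _ _ _ _ _
  rw [dq, h1, smul_zero, add_zero, norm_prodMap, hG₁]
  have h2 : max 1 ‖G₂ + t • z₂‖ - 1 = max (‖G₂ + t • z₂‖ - 1) 0 := by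
    rcases le_total ‖G₂ + t • z₂‖ 1 with h | h
    · rw [max_eq_left h, max_eq_right (by linarith)]; ring
    · rw [max_eq_right h, max_eq_left (by linarith)]
  rw [h2]
  have h3 : Monotone (fun r : ℝ => r / t) := fun a b hab => div_le_div_of_nonneg_right hab ht.le
  have := h3.map_max (a := ‖G₂ + t • z₂‖ - 1) (b := 0)
  simp only [zero_div] at this
  rw [this]
  rfl

lemma tau_prodMap_right {G₁ : X₁ →L[ℝ] Y₁} {G₂ : X₂ →L[ℝ] Y₂} (hG₁ : ‖G₁‖ = 1)
    (hG₂ : ‖G₂‖ = 1) (z₂ : X₂ →L[ℝ] Y₂) :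
    tau (G₁.prodMap G₂) ((0 : X₁ →L[ℝ] Y₁).prodMap z₂) = max (tau G₂ z₂) 0 := by
  rw [tau]
  have himg : dq (G₁.prodMap G₂) ((0 : X₁ →L[ℝ] Y₁).prodMap z₂) '' Ioi 0
      = (fun t => max (dq G₂ z₂ t) 0) '' Ioi 0 := by
    apply image_congr
    intro t ht
    exact dq_prodMap_right hG₁ z₂ (mem_Ioi.mp ht)
  rw [himg, sInf_image_max_zero _ (dq_bddBelow hG₂)]
  rfl

lemma vRad_prodMap_right {G₁ : X₁ →L[ℝ] Y₁} {G₂ : X₂ →L[ℝ] Y₂} (hG₁ : ‖G₁‖ = 1)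
    (hG₂ : ‖G₂‖ = 1) (z₂ : X₂ →L[ℝ] Y₂) :
    vRad (G₁.prodMap G₂) ((0 : X₁ →L[ℝ] Y₁).prodMap z₂) = vRad G₂ z₂ := by
  have hu : ‖G₁.prodMap G₂‖ = 1 := norm_prodMap_one hG₁ hG₂
  rw [vRad_eq_max_tau hu]
  have hneg : -((0 : X₁ →L[ℝ] Y₁).prodMap z₂) = (0 : X₁ →L[ℝ] Y₁).prodMap (-z₂) := by
    rw [neg_prodMap, neg_zero]
  rw [hneg, tau_prodMap_right hG₁ hG₂, tau_prodMap_right hG₁ hG₂,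
    max_max_max_comm, max_self, ← vRad_eq_max_tau hG₂]
  exact max_eq_left (vRad_nonneg hG₂ z₂)

end NumIdx

namespace NumIdx
open NormedSpace
variable {Z : Type*} [NormedAddCommGroup Z] [NormedSpace ℝ Z]

lemma nSet_nonempty {u : Z} (hu : ‖u‖ = 1) :
    {r : ℝ | ∃ z : Z, ‖z‖ = 1 ∧ vRad u z = r}.Nonempty := ⟨vRad u u, u, hu, rfl⟩

lemma nSet_bddBelow {u : Z} (hu : ‖u‖ = 1) :
    BddBelow {r : ℝ | ∃ z : Z, ‖z‖ = 1 ∧ vRad u z = r} := by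
  refine ⟨0, ?_⟩
  rintro r ⟨z, hz, rfl⟩
  exact vRad_nonneg hu z

lemma nInd_nonneg {u : Z} (hu : ‖u‖ = 1) : 0 ≤ nInd u := by
  apply le_csInf (nSet_nonempty hu)
  rintro r ⟨z, hz, rfl⟩
  exact vRad_nonneg hu z

lemma nInd_le_vRad {u z : Z} (hu : ‖u‖ = 1) (hz : ‖z‖ = 1) : nInd u ≤ vRad u z :=
  csInf_le (nSet_bddBelow hu) ⟨z, hz, rfl⟩

lemma nInd_le_one {u : Z} (hu : ‖u‖ = 1) : nInd u ≤ 1 := by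
  refine (nInd_le_vRad hu hu).trans ?_
  rw [← hu]
  exact vRad_le_norm hu u

lemma le_nInd {u : Z} {c : ℝ} (hne : {r : ℝ | ∃ z : Z, ‖z‖ = 1 ∧ vRad u z = r}.Nonempty)
    (h : ∀ z : Z, ‖z‖ = 1 → c ≤ vRad u z) : c ≤ nInd u := by
  apply le_csInf hne
  rintro r ⟨z, hz, rfl⟩
  exact h z hz

end NumIdx

namespace NumIdx
open ContinuousLinearMap

variable {X Y : Type*} [NormedAddCommGroup X] [NormedSpace ℝ X]
  [NormedAddCommGroup Y] [NormedSpace ℝ Y]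

/-- The key norm inequality coming from the numerical index of a component. -/
lemma comp_norm_lemma {G : X →L[ℝ] Y} (hG : ‖G‖ = 1) (S : X →L[ℝ] Y) {t : ℝ} (ht : 0 < t) :
    1 + t * (nInd G * ‖S‖) ≤ max ‖G + t • S‖ ‖G - t • S‖ := by
  rcases eq_or_ne S 0 with rfl | hS0
  · simp [hG]
  · have hS : 0 < ‖S‖ := norm_pos_iff.mpr hS0
    set S' : X →L[ℝ] Y := ‖S‖⁻¹ • S with hS'def
    have hS' : ‖S'‖ = 1 := by
      have h0 : ‖(‖S‖⁻¹ : ℝ) • S‖ = ‖(‖S‖⁻¹ : ℝ)‖ * ‖S‖ := norm_smul _ S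
      rw [hS'def, h0, Real.norm_eq_abs, abs_of_pos (inv_pos.mpr hS), inv_mul_cancel₀ hS.ne']
    set r := t * ‖S‖ with hrdef
    have hr : 0 < r := mul_pos ht hS
    have hrS : r • S' = t • S := by
      rw [hS'def, hrdef, smul_smul]
      rw [mul_assoc, mul_inv_cancel₀ hS.ne', mul_one]
    have hrS' : r • (-S') = -(t • S) := by rw [smul_neg, hrS]
    have h1 : nInd G ≤ max (dq G S' r) (dq G (-S') r) := by
      calc nInd G ≤ vRad G S' := nInd_le_vRad hG hS'
        _ = max (tau G S') (tau G (-S')) := vRad_eq_max_tau hG S'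
        _ ≤ max (dq G S' r) (dq G (-S') r) :=
            max_le_max (tau_le_dq hG hr) (tau_le_dq hG hr)
    have h2 : dq G S' r = (‖G + t • S‖ - 1) / r := by rw [dq, hrS]
    have h3 : dq G (-S') r = (‖G - t • S‖ - 1) / r := by
      rw [dq, hrS', ← sub_eq_add_neg]
    rw [h2, h3] at h1
    have hmax : max ((‖G + t • S‖ - 1) / r) ((‖G - t • S‖ - 1) / r)
        = (max ‖G + t • S‖ ‖G - t • S‖ - 1) / r := by
      have h4 : Monotone (fun x : ℝ => x / r) := fun a b hab =>
        div_le_div_of_nonneg_right hab hr.le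
      rw [← h4.map_max]
      congr 1
      rcases le_total ‖G + t • S‖ ‖G - t • S‖ with h | h
      · rw [max_eq_right h, max_eq_right (by linarith)]
      · rw [max_eq_left h, max_eq_left (by linarith)]
    rw [hmax, le_div_iff₀ hr] at h1
    rw [hrdef] at h1
    nlinarith [h1]

end NumIdx

namespace NumIdx
open Set

lemma sphere_adjust {X Y : Type*} [NormedAddCommGroup X] [NormedSpace ℝ X]
    [NormedAddCommGroup Y] [NormedSpace ℝ Y]
    (A : X →L[ℝ] Y) (y₀ : Y) {x : X} (hx : ‖x‖ ≤ 1) {c : ℝ} (hc : c < ‖A x + y₀‖)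
    {v : X} (hv : ‖v‖ = 1) :
    ∃ e : X, ‖e‖ = 1 ∧ c < ‖A e + y₀‖ := by
  rcases eq_or_lt_of_le hx with heq | hlt
  · exact ⟨x, heq, hc⟩
  · have φcont : Continuous fun s : ℝ => ‖x + s • v‖ :=
      (continuous_const.add (continuous_id.smul continuous_const)).norm
    have hsmul2 : ‖((2:ℝ)) • v‖ = 2 := by
      rw [norm_smul, hv, Real.norm_eq_abs]; norm_num
    have hφ0 : ‖x + (0:ℝ) • v‖ < 1 := by
      rw [zero_smul, add_zero]; exact hlt
    have hφ2 : 1 ≤ ‖x + (2:ℝ) • v‖ := by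
      have h := norm_sub_le (x + (2:ℝ) • v) x
      have h2 : x + (2:ℝ) • v - x = (2:ℝ) • v := by abel
      rw [h2, hsmul2] at h
      linarith
    have hφm2 : 1 ≤ ‖x + (-2:ℝ) • v‖ := by
      have h := norm_sub_le (x + (-2:ℝ) • v) x
      have h2 : x + (-2:ℝ) • v - x = (-2:ℝ) • v := by abel
      have h3 : ‖(-2:ℝ) • v‖ = 2 := by
        rw [norm_smul, hv, Real.norm_eq_abs]; norm_num
      rw [h2, h3] at h
      linarith
    obtain ⟨sp, hspmem, hsp⟩ := intermediate_value_Icc (by norm_num : (0:ℝ) ≤ 2)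
      φcont.continuousOn ⟨hφ0.le, hφ2⟩
    obtain ⟨sm, hsmmem, hsm⟩ := intermediate_value_Icc' (by norm_num : (-2:ℝ) ≤ 0)
      φcont.continuousOn ⟨hφ0.le, hφm2⟩
    dsimp only at hsp hsm
    have hsppos : 0 < sp := by
      rcases hspmem.1.lt_or_eq with h | h
      · exact h
      · exfalso; rw [← h] at hsp; rw [zero_smul, add_zero] at hsp hφ0; linarith
    have hsmneg : sm < 0 := by
      rcases hsmmem.2.lt_or_eq with h | h
      · exact h
      · exfalso; rw [h] at hsm; rw [zero_smul, add_zero] at hsm hφ0; linarith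
    set θ : ℝ := -sm / (sp - sm) with hθdef
    have hd : 0 < sp - sm := by linarith
    have hθ0 : 0 < θ := div_pos (by linarith) hd
    have hθ1 : θ < 1 := by
      rw [hθdef, div_lt_one hd]; linarith
    have hcoef : (1 - θ) * sm + θ * sp = 0 := by
      rw [hθdef]; field_simp; ring
    have hcomb : (1 - θ) • (x + sm • v) + θ • (x + sp • v) = x := by
      have expand : (1 - θ) • (x + sm • v) + θ • (x + sp • v)
          = x + ((1 - θ) * sm + θ * sp) • v := by module
      rw [expand, hcoef, zero_smul, add_zero]
    have hkey : A x + y₀ = (1 - θ) • (A (x + sm • v) + y₀) + θ • (A (x + sp • v) + y₀) := by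
      have h1 : A x = (1 - θ) • A (x + sm • v) + θ • A (x + sp • v) := by
        rw [← map_smul, ← map_smul, ← map_add, hcomb]
      rw [h1]
      have : (1:ℝ) • y₀ = y₀ := one_smul _ _
      module
    rcases le_or_gt ‖A (x + sm • v) + y₀‖ c with h1 | h1
    · rcases le_or_gt ‖A (x + sp • v) + y₀‖ c with h2 | h2
      · exfalso
        have hb : ‖A x + y₀‖ ≤ (1 - θ) * ‖A (x + sm • v) + y₀‖ + θ * ‖A (x + sp • v) + y₀‖ := by
          rw [hkey]
          refine (norm_add_le _ _).trans ?_
          rw [norm_smul, norm_smul, Real.norm_eq_abs, Real.norm_eq_abs,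
            abs_of_pos hθ0, abs_of_pos (by linarith : (0:ℝ) < 1 - θ)]
        have : ‖A x + y₀‖ ≤ c := by nlinarith
        linarith
      · exact ⟨x + sp • v, hsp, h2⟩
    · exact ⟨x + sm • v, hsm, h1⟩

end NumIdx

namespace NumIdx
open ContinuousLinearMap Set

variable {X₁ X₂ Y₁ Y₂ : Type*} [NormedAddCommGroup X₁] [NormedSpace ℝ X₁]
  [NormedAddCommGroup X₂] [NormedSpace ℝ X₂]
  [NormedAddCommGroup Y₁] [NormedSpace ℝ Y₁]
  [NormedAddCommGroup Y₂] [NormedSpace ℝ Y₂]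

lemma core_left {G₁ : X₁ →L[ℝ] Y₁} {G₂ : X₂ →L[ℝ] Y₂} (hG₁ : ‖G₁‖ = 1)
    (T : X₁ × X₂ →L[ℝ] Y₁ × Y₂) {t : ℝ} (ht : 0 < t) (x : X₁ × X₂) (hx : ‖x‖ ≤ 1)
    {ε : ℝ} (h1 : 1 - ε < ‖(T x).1‖) {v : X₁} (hv : ‖v‖ = 1) :
    1 + t * (nInd G₁ * (1 - ε)) ≤
      max ‖G₁.prodMap G₂ + t • T‖ ‖G₁.prodMap G₂ - t • T‖ := by
  have hm : max ‖x.1‖ ‖x.2‖ ≤ 1 := by rw [← Prod.norm_def]; exact hx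
  have hx1 : ‖x.1‖ ≤ 1 := le_trans (le_max_left _ _) hm
  have hx2 : ‖x.2‖ ≤ 1 := le_trans (le_max_right _ _) hm
  -- affine decomposition of w ↦ (T (w, x.2)).1
  set A : X₁ →L[ℝ] Y₁ := (fst ℝ Y₁ Y₂).comp (T.comp (inl ℝ X₁ X₂)) with hAdef
  set y₀ : Y₁ := (T (0, x.2)).1 with hy₀def
  have hAff : ∀ w : X₁, (T (w, x.2)).1 = A w + y₀ := by
    intro w
    have hsplit : ((w, x.2) : X₁ × X₂) = (w, 0) + (0, x.2) := by simp
    rw [hsplit, map_add]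
    rfl
  have hc : 1 - ε < ‖A x.1 + y₀‖ := by
    rw [← hAff x.1]
    exact h1
  obtain ⟨e, he, hce⟩ := sphere_adjust A y₀ hx1 hc hv
  have he0 : e ≠ 0 := by
    intro h; rw [h, norm_zero] at he; norm_num at he
  obtain ⟨f, hf1, hf2⟩ := exists_dual_vector ℝ e (norm_ne_zero_iff.mpr he0)
  rw [he] at hf2
  have hf2' : f e = 1 := by exact_mod_cast hf2
  set j : X₁ →L[ℝ] X₁ × X₂ := (ContinuousLinearMap.id ℝ X₁).prod (f.smulRight x.2) with hjdef
  have hjapp : ∀ w, j w = (w, f w • x.2) := fun w => rfl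
  have hjnorm : ∀ w, ‖j w‖ ≤ ‖w‖ := by
    intro w
    rw [hjapp, Prod.norm_def]
    apply max_le le_rfl
    calc ‖f w • x.2‖ = ‖f w‖ * ‖x.2‖ := norm_smul _ _
      _ ≤ (‖f‖ * ‖w‖) * 1 := by
          apply mul_le_mul (f.le_opNorm w) hx2 (norm_nonneg _) (by positivity)
      _ = ‖w‖ := by rw [hf1, one_mul, mul_one]
  have hΦnorm : ∀ B : X₁ × X₂ →L[ℝ] Y₁ × Y₂, ‖(fst ℝ Y₁ Y₂).comp (B.comp j)‖ ≤ ‖B‖ := by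
    intro B
    apply opNorm_le_bound _ (norm_nonneg B)
    intro w
    calc ‖((fst ℝ Y₁ Y₂).comp (B.comp j)) w‖ = ‖(B (j w)).1‖ := rfl
      _ ≤ ‖B (j w)‖ := by rw [Prod.norm_def]; exact le_max_left _ _
      _ ≤ ‖B‖ * ‖j w‖ := B.le_opNorm _
      _ ≤ ‖B‖ * ‖w‖ := mul_le_mul_of_nonneg_left (hjnorm w) (norm_nonneg B)
  set S : X₁ →L[ℝ] Y₁ := (fst ℝ Y₁ Y₂).comp (T.comp j) with hSdef
  have hΦadd : (fst ℝ Y₁ Y₂).comp ((G₁.prodMap G₂ + t • T).comp j) = G₁ + t • S := by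
    ext w
    have lhs1 : ((fst ℝ Y₁ Y₂).comp ((G₁.prodMap G₂ + t • T).comp j)) w
        = ((G₁.prodMap G₂) (j w)).1 + t • (T (j w)).1 := rfl
    have rhs1 : (G₁ + t • S) w = G₁ w + t • (T (j w)).1 := rfl
    rw [lhs1, rhs1, hjapp]
    rfl
  have hΦsub : (fst ℝ Y₁ Y₂).comp ((G₁.prodMap G₂ - t • T).comp j) = G₁ - t • S := by
    ext w
    have lhs1 : ((fst ℝ Y₁ Y₂).comp ((G₁.prodMap G₂ - t • T).comp j)) w
        = ((G₁.prodMap G₂) (j w)).1 - t • (T (j w)).1 := rfl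
    have rhs1 : (G₁ - t • S) w = G₁ w - t • (T (j w)).1 := rfl
    rw [lhs1, rhs1, hjapp]
    rfl
  have hSnorm : 1 - ε ≤ ‖S‖ := by
    have hje : j e = (e, x.2) := by rw [hjapp, hf2', one_smul]
    have hSe : S e = (T (e, x.2)).1 := by
      have : S e = (T (j e)).1 := rfl
      rw [this, hje]
    have hb : ‖S e‖ ≤ ‖S‖ * ‖e‖ := S.le_opNorm e
    rw [he, mul_one] at hb
    rw [← hAff, ← hSe] at hce
    linarith
  have hmain := comp_norm_lemma hG₁ S ht
  have hstep : 1 + t * (nInd G₁ * (1 - ε)) ≤ 1 + t * (nInd G₁ * ‖S‖) := by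
    have hn := nInd_nonneg hG₁
    have h1 : nInd G₁ * (1 - ε) ≤ nInd G₁ * ‖S‖ := mul_le_mul_of_nonneg_left hSnorm hn
    have h2 : t * (nInd G₁ * (1 - ε)) ≤ t * (nInd G₁ * ‖S‖) :=
      mul_le_mul_of_nonneg_left h1 ht.le
    linarith
  refine hstep.trans (hmain.trans ?_)
  rw [← hΦadd, ← hΦsub]
  exact max_le_max (hΦnorm _) (hΦnorm _)

end NumIdx

namespace NumIdx
open ContinuousLinearMap Set

variable {X₁ X₂ Y₁ Y₂ : Type*} [NormedAddCommGroup X₁] [NormedSpace ℝ X₁]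
  [NormedAddCommGroup X₂] [NormedSpace ℝ X₂]
  [NormedAddCommGroup Y₁] [NormedSpace ℝ Y₁]
  [NormedAddCommGroup Y₂] [NormedSpace ℝ Y₂]

lemma core_right {G₁ : X₁ →L[ℝ] Y₁} {G₂ : X₂ →L[ℝ] Y₂} (hG₂ : ‖G₂‖ = 1)
    (T : X₁ × X₂ →L[ℝ] Y₁ × Y₂) {t : ℝ} (ht : 0 < t) (x : X₁ × X₂) (hx : ‖x‖ ≤ 1)
    {ε : ℝ} (h1 : 1 - ε < ‖(T x).2‖) {v : X₂} (hv : ‖v‖ = 1) :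
    1 + t * (nInd G₂ * (1 - ε)) ≤
      max ‖G₁.prodMap G₂ + t • T‖ ‖G₁.prodMap G₂ - t • T‖ := by
  have hm : max ‖x.1‖ ‖x.2‖ ≤ 1 := by rw [← Prod.norm_def]; exact hx
  have hx1 : ‖x.1‖ ≤ 1 := le_trans (le_max_left _ _) hm
  have hx2 : ‖x.2‖ ≤ 1 := le_trans (le_max_right _ _) hm
  set A : X₂ →L[ℝ] Y₂ := (snd ℝ Y₁ Y₂).comp (T.comp (inr ℝ X₁ X₂)) with hAdef
  set y₀ : Y₂ := (T (x.1, 0)).2 with hy₀def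
  have hAff : ∀ w : X₂, (T (x.1, w)).2 = A w + y₀ := by
    intro w
    have hsplit : ((x.1, w) : X₁ × X₂) = (0, w) + (x.1, 0) := by simp
    rw [hsplit, map_add]
    rfl
  have hc : 1 - ε < ‖A x.2 + y₀‖ := by
    rw [← hAff x.2]
    exact h1
  obtain ⟨e, he, hce⟩ := sphere_adjust A y₀ hx2 hc hv
  have he0 : e ≠ 0 := by
    intro h; rw [h, norm_zero] at he; norm_num at he
  obtain ⟨f, hf1, hf2⟩ := exists_dual_vector ℝ e (norm_ne_zero_iff.mpr he0)
  rw [he] at hf2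
  have hf2' : f e = 1 := by exact_mod_cast hf2
  set j : X₂ →L[ℝ] X₁ × X₂ := (f.smulRight x.1).prod (ContinuousLinearMap.id ℝ X₂) with hjdef
  have hjapp : ∀ w, j w = (f w • x.1, w) := fun w => rfl
  have hjnorm : ∀ w, ‖j w‖ ≤ ‖w‖ := by
    intro w
    rw [hjapp, Prod.norm_def]
    refine max_le ?_ le_rfl
    calc ‖f w • x.1‖ = ‖f w‖ * ‖x.1‖ := norm_smul _ _
      _ ≤ (‖f‖ * ‖w‖) * 1 := by
          apply mul_le_mul (f.le_opNorm w) hx1 (norm_nonneg _) (by positivity)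
      _ = ‖w‖ := by rw [hf1, one_mul, mul_one]
  have hΦnorm : ∀ B : X₁ × X₂ →L[ℝ] Y₁ × Y₂, ‖(snd ℝ Y₁ Y₂).comp (B.comp j)‖ ≤ ‖B‖ := by
    intro B
    apply opNorm_le_bound _ (norm_nonneg B)
    intro w
    calc ‖((snd ℝ Y₁ Y₂).comp (B.comp j)) w‖ = ‖(B (j w)).2‖ := rfl
      _ ≤ ‖B (j w)‖ := by rw [Prod.norm_def]; exact le_max_right _ _
      _ ≤ ‖B‖ * ‖j w‖ := B.le_opNorm _
      _ ≤ ‖B‖ * ‖w‖ := mul_le_mul_of_nonneg_left (hjnorm w) (norm_nonneg B)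
  set S : X₂ →L[ℝ] Y₂ := (snd ℝ Y₁ Y₂).comp (T.comp j) with hSdef
  have hΦadd : (snd ℝ Y₁ Y₂).comp ((G₁.prodMap G₂ + t • T).comp j) = G₂ + t • S := by
    ext w
    have lhs1 : ((snd ℝ Y₁ Y₂).comp ((G₁.prodMap G₂ + t • T).comp j)) w
        = ((G₁.prodMap G₂) (j w)).2 + t • (T (j w)).2 := rfl
    have rhs1 : (G₂ + t • S) w = G₂ w + t • (T (j w)).2 := rfl
    rw [lhs1, rhs1, hjapp]
    rfl
  have hΦsub : (snd ℝ Y₁ Y₂).comp ((G₁.prodMap G₂ - t • T).comp j) = G₂ - t • S := by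
    ext w
    have lhs1 : ((snd ℝ Y₁ Y₂).comp ((G₁.prodMap G₂ - t • T).comp j)) w
        = ((G₁.prodMap G₂) (j w)).2 - t • (T (j w)).2 := rfl
    have rhs1 : (G₂ - t • S) w = G₂ w - t • (T (j w)).2 := rfl
    rw [lhs1, rhs1, hjapp]
    rfl
  have hSnorm : 1 - ε ≤ ‖S‖ := by
    have hje : j e = (x.1, e) := by rw [hjapp, hf2', one_smul]
    have hSe : S e = (T (x.1, e)).2 := by
      have : S e = (T (j e)).2 := rfl
      rw [this, hje]
    have hb : ‖S e‖ ≤ ‖S‖ * ‖e‖ := S.le_opNorm e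
    rw [he, mul_one] at hb
    rw [← hAff, ← hSe] at hce
    linarith
  have hmain := comp_norm_lemma hG₂ S ht
  have hstep : 1 + t * (nInd G₂ * (1 - ε)) ≤ 1 + t * (nInd G₂ * ‖S‖) := by
    have hn := nInd_nonneg hG₂
    have h1' : nInd G₂ * (1 - ε) ≤ nInd G₂ * ‖S‖ := mul_le_mul_of_nonneg_left hSnorm hn
    have h2' : t * (nInd G₂ * (1 - ε)) ≤ t * (nInd G₂ * ‖S‖) :=
      mul_le_mul_of_nonneg_left h1' ht.le
    linarith
  refine hstep.trans (hmain.trans ?_)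
  rw [← hΦadd, ← hΦsub]
  exact max_le_max (hΦnorm _) (hΦnorm _)

end NumIdx

namespace NumIdx
open ContinuousLinearMap Set

lemma exists_unit_vector {X Y : Type*} [NormedAddCommGroup X] [NormedSpace ℝ X]
    [NormedAddCommGroup Y] [NormedSpace ℝ Y] {G : X →L[ℝ] Y} (hG : ‖G‖ = 1) :
    ∃ v : X, ‖v‖ = 1 := by
  have hG0 : G ≠ 0 := by
    intro h
    rw [h, norm_zero] at hG
    norm_num at hG
  have : ∃ w : X, G w ≠ 0 := by
    by_contra h
    push_neg at h
    exact hG0 (ContinuousLinearMap.ext fun w => by rw [h w]; rfl)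
  obtain ⟨w, hw⟩ := this
  have hw0 : w ≠ 0 := by
    intro h
    rw [h, map_zero] at hw
    exact hw rfl
  have hwn : 0 < ‖w‖ := norm_pos_iff.mpr hw0
  refine ⟨‖w‖⁻¹ • w, ?_⟩
  rw [norm_smul, norm_inv, norm_norm, inv_mul_cancel₀ hwn.ne']

lemma max_div_sub {a b t : ℝ} (ht : 0 < t) :
    max ((a - 1) / t) ((b - 1) / t) = (max a b - 1) / t := by
  have h4 : Monotone (fun x : ℝ => x / t) := fun p q hpq =>
    div_le_div_of_nonneg_right hpq ht.le
  rw [← h4.map_max]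
  congr 1
  rcases le_total a b with h | h
  · rw [max_eq_right h, max_eq_right (by linarith)]
  · rw [max_eq_left h, max_eq_left (by linarith)]

variable {X₁ X₂ Y₁ Y₂ : Type*} [NormedAddCommGroup X₁] [NormedSpace ℝ X₁]
  [NormedAddCommGroup X₂] [NormedSpace ℝ X₂]
  [NormedAddCommGroup Y₁] [NormedSpace ℝ Y₁]
  [NormedAddCommGroup Y₂] [NormedSpace ℝ Y₂]

lemma lower_bound {G₁ : X₁ →L[ℝ] Y₁} {G₂ : X₂ →L[ℝ] Y₂} (hG₁ : ‖G₁‖ = 1) (hG₂ : ‖G₂‖ = 1)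
    (T : X₁ × X₂ →L[ℝ] Y₁ × Y₂) (hT : ‖T‖ = 1) :
    min (nInd G₁) (nInd G₂) ≤ vRad (G₁.prodMap G₂) T := by
  have hu : ‖G₁.prodMap G₂‖ = 1 := norm_prodMap_one hG₁ hG₂
  refine le_of_forall_pos_le_add ?_
  intro ε hε
  set ε' : ℝ := min (ε / 2) (1 / 2) with hε'def
  have hε'pos : 0 < ε' := lt_min (by linarith) (by norm_num)
  have hε'le : ε' ≤ ε := le_trans (min_le_left _ _) (by linarith)
  have hε'lt1 : ε' < 1 := lt_of_le_of_lt (min_le_right _ _) (by norm_num)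
  suffices h : min (nInd G₁) (nInd G₂) - ε' ≤ vRad (G₁.prodMap G₂) T by linarith
  rw [vRad_eq_max_tau hu]
  set c : ℝ := min (nInd G₁) (nInd G₂) - ε' with hcdef
  have key : ∀ t, 0 < t →
      c ≤ max (dq (G₁.prodMap G₂) T t) (dq (G₁.prodMap G₂) (-T) t) := by
    intro t ht
    -- find a good unit vector x
    have hx0 : ∃ x0 : X₁ × X₂, (1 - ε') * ‖x0‖ < ‖T x0‖ := by
      by_contra h
      push_neg at h
      have : ‖T‖ ≤ 1 - ε' := opNorm_le_bound T (by linarith) fun x => (h x).trans (le_of_eq rfl)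
      rw [hT] at this
      linarith
    obtain ⟨x0, hx0⟩ := hx0
    have hx00 : x0 ≠ 0 := by
      intro h
      rw [h, norm_zero, map_zero, norm_zero, mul_zero] at hx0
      exact lt_irrefl _ hx0
    have hx0n : 0 < ‖x0‖ := norm_pos_iff.mpr hx00
    set x : X₁ × X₂ := ‖x0‖⁻¹ • x0 with hxdef
    have hxn : ‖x‖ = 1 := by
      rw [hxdef, norm_smul, norm_inv, norm_norm, inv_mul_cancel₀ hx0n.ne']
    have hTx : 1 - ε' < ‖T x‖ := by
      have h5 : T x = ‖x0‖⁻¹ • T x0 := by rw [hxdef, map_smul]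
      have h6 : ‖T x‖ = ‖x0‖⁻¹ * ‖T x0‖ := by
        rw [h5, norm_smul, norm_inv, norm_norm]
      have h7 : ‖x0‖⁻¹ * ((1 - ε') * ‖x0‖) < ‖x0‖⁻¹ * ‖T x0‖ :=
        mul_lt_mul_of_pos_left hx0 (inv_pos.mpr hx0n)
      have h8 : ‖x0‖⁻¹ * ((1 - ε') * ‖x0‖) = 1 - ε' := by
        field_simp
      rw [h6]
      linarith
    have hTmax : 1 - ε' < max ‖(T x).1‖ ‖(T x).2‖ := by
      rw [← Prod.norm_def]
      exact hTx
    have hd2 : dq (G₁.prodMap G₂) (-T) t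
        = (‖G₁.prodMap G₂ - t • T‖ - 1) / t := by
      rw [dq, smul_neg, ← sub_eq_add_neg]
    have hd1 : dq (G₁.prodMap G₂) T t = (‖G₁.prodMap G₂ + t • T‖ - 1) / t := rfl
    rw [hd1, hd2, max_div_sub ht, le_div_iff₀ ht]
    rcases lt_max_iff.mp hTmax with h1 | h1
    · obtain ⟨v, hv⟩ := exists_unit_vector hG₁
      have hcore := core_left (G₂ := G₂) hG₁ T ht x (le_of_eq hxn) h1 hv
      have hn1 : nInd G₁ ≤ 1 := nInd_le_one hG₁
      have hn0 : 0 ≤ nInd G₁ := nInd_nonneg hG₁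
      have hmin : min (nInd G₁) (nInd G₂) ≤ nInd G₁ := min_le_left _ _
      have hexp : nInd G₁ * (1 - ε') = nInd G₁ - nInd G₁ * ε' := by ring
      have hprod : nInd G₁ * ε' ≤ ε' := by
        have := mul_le_mul_of_nonneg_right hn1 hε'pos.le
        linarith
      have hstep : c ≤ nInd G₁ * (1 - ε') := by
        rw [hcdef]
        linarith
      have hc' : c * t ≤ t * (nInd G₁ * (1 - ε')) := by
        rw [mul_comm c t]
        exact mul_le_mul_of_nonneg_left hstep ht.le
      linarith
    · obtain ⟨v, hv⟩ := exists_unit_vector hG₂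
      have hcore := core_right (G₁ := G₁) hG₂ T ht x (le_of_eq hxn) h1 hv
      have hn1 : nInd G₂ ≤ 1 := nInd_le_one hG₂
      have hn0 : 0 ≤ nInd G₂ := nInd_nonneg hG₂
      have hmin : min (nInd G₁) (nInd G₂) ≤ nInd G₂ := min_le_right _ _
      have hexp : nInd G₂ * (1 - ε') = nInd G₂ - nInd G₂ * ε' := by ring
      have hprod : nInd G₂ * ε' ≤ ε' := by
        have := mul_le_mul_of_nonneg_right hn1 hε'pos.le
        linarith
      have hstep : c ≤ nInd G₂ * (1 - ε') := by
        rw [hcdef]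
        linarith
      have hc' : c * t ≤ t * (nInd G₂ * (1 - ε')) := by
        rw [mul_comm c t]
        exact mul_le_mul_of_nonneg_left hstep ht.le
      linarith
  -- combine using monotonicity
  by_contra hcon
  push_neg at hcon
  rw [max_lt_iff] at hcon
  obtain ⟨h1, h2⟩ := hcon
  obtain ⟨r1, ⟨t1, ht1, rfl⟩, hr1⟩ := exists_lt_of_csInf_lt
    (dq_nonempty (G₁.prodMap G₂) T) h1
  obtain ⟨r2, ⟨t2, ht2, rfl⟩, hr2⟩ := exists_lt_of_csInf_lt
    (dq_nonempty (G₁.prodMap G₂) (-T)) h2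
  rw [mem_Ioi] at ht1 ht2
  set t := min t1 t2 with htdef
  have ht : 0 < t := lt_min ht1 ht2
  have hm1 : dq (G₁.prodMap G₂) T t ≤ dq (G₁.prodMap G₂) T t1 :=
    dq_mono hu ht (min_le_left _ _)
  have hm2 : dq (G₁.prodMap G₂) (-T) t ≤ dq (G₁.prodMap G₂) (-T) t2 :=
    dq_mono hu ht (min_le_right _ _)
  have := key t ht
  have hlt : max (dq (G₁.prodMap G₂) T t) (dq (G₁.prodMap G₂) (-T) t) < c :=
    max_lt (lt_of_le_of_lt hm1 hr1) (lt_of_le_of_lt hm2 hr2)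
  linarith

end NumIdx

theorem stmt19 {X₁ X₂ Y₁ Y₂ : Type*}
    [NormedAddCommGroup X₁] [NormedSpace ℝ X₁] [CompleteSpace X₁]
    [NormedAddCommGroup X₂] [NormedSpace ℝ X₂] [CompleteSpace X₂]
    [NormedAddCommGroup Y₁] [NormedSpace ℝ Y₁] [CompleteSpace Y₁]
    [NormedAddCommGroup Y₂] [NormedSpace ℝ Y₂] [CompleteSpace Y₂]
    (G₁ : X₁ →L[ℝ] Y₁) (hG₁ : ‖G₁‖ = 1) (G₂ : X₂ →L[ℝ] Y₂) (hG₂ : ‖G₂‖ = 1) :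
    nInd (G₁.prodMap G₂) = min (nInd G₁) (nInd G₂) := by
  have hu : ‖G₁.prodMap G₂‖ = 1 := NumIdx.norm_prodMap_one hG₁ hG₂
  apply le_antisymm
  · apply le_min
    · apply le_csInf (NumIdx.nSet_nonempty hG₁)
      rintro r ⟨z₁, hz₁, rfl⟩
      have hz : ‖z₁.prodMap (0 : X₂ →L[ℝ] Y₂)‖ = 1 := by
        rw [NumIdx.norm_prodMap, hz₁, norm_zero]
        exact max_eq_left zero_le_one
      exact csInf_le (NumIdx.nSet_bddBelow hu)
        ⟨_, hz, NumIdx.vRad_prodMap_left hG₁ hG₂ z₁⟩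
    · apply le_csInf (NumIdx.nSet_nonempty hG₂)
      rintro r ⟨z₂, hz₂, rfl⟩
      have hz : ‖(0 : X₁ →L[ℝ] Y₁).prodMap z₂‖ = 1 := by
        rw [NumIdx.norm_prodMap, hz₂, norm_zero]
        exact max_eq_right zero_le_one
      exact csInf_le (NumIdx.nSet_bddBelow hu)
        ⟨_, hz, NumIdx.vRad_prodMap_right hG₁ hG₂ z₂⟩
  · apply le_csInf (NumIdx.nSet_nonempty hu)
    rintro r ⟨T, hT, rfl⟩
    exact NumIdx.lower_bound hG₁ hG₂ T hT
end
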